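/- arXiv:1811.06640 — 11 statements merged into one kernel-verified Lean document; each statement's English description precedes it below -/
import Mathlib

section
/- Let w be a scalar with |w| > 1 and 1 ≤ p < ∞. Define B on ℓ^p by (Bx)_1 = 0 and (Bx)_{k+1} = w^{-k} x_k for k ∈ ℕ. Then for every n ∈ ℕ and x ∈ ℓ^p: (i) Bⁿx ∈ ℓ^p with (Bⁿx)_k = 0 for k ≤ n and (Bⁿx)_{n+j} = w^{-[(n+j−1)+(n+j−2)+⋯+j]} x_j for j ∈ ℕ; (ii) ‖Bⁿx‖_p ≤ |w|^{-(n+(n−1)+⋯+1)} ‖x‖_p; (iii) Bⁿx ∈ D(Aⁿ) and AⁿBⁿx = x, i.e., B is a bounded right inverse of A. -/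
open scoped ENNReal

/-- Let `|w| > 1`, `1 ≤ p < ∞`, `A` the weighted backward shift
(0-based: `A x k = w ^ (k+1) * x (k+1)`) and `B` the weighted forward shift (0-based:
`B x 0 = 0`, `B x (k+1) = w⁻¹ ^ (k+1) * x k`) on `ℓ^p`. Then for every `n` and every
`x ∈ ℓ^p`: (i) `Bⁿx ∈ ℓ^p`, with `(Bⁿx)ₖ = 0` for the first `n` entries and
`(Bⁿx)ₙ₊ⱼ = w^{-[(n+j-1)+⋯+j]} xⱼ`; (ii) `‖Bⁿx‖_p ≤ |w|^{-(n+(n-1)+⋯+1)} ‖x‖_p`;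
(iii) `Bⁿx ∈ D(Aⁿ)` and `AⁿBⁿx = x`, i.e. `B` is a bounded right inverse of `A`. -/
theorem rolewicz_lp_right_inverse {𝕜 : Type*} [RCLike 𝕜]
    (w : 𝕜) (hw : 1 < ‖w‖) (p : ℝ≥0∞) [Fact (1 ≤ p)] (hp' : p ≠ ∞)
    (A : (ℕ → 𝕜) → ℕ → 𝕜) (hA : ∀ x k, A x k = w ^ (k + 1) * x (k + 1))
    (B : (ℕ → 𝕜) → ℕ → 𝕜)
    (hB0 : ∀ x : ℕ → 𝕜, B x 0 = 0)
    (hB : ∀ (x : ℕ → 𝕜) (k : ℕ), B x (k + 1) = w⁻¹ ^ (k + 1) * x k) :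
    ∀ (n : ℕ) (x : lp (fun _ : ℕ => 𝕜) p),
      ∃ hBn : Memℓp (B^[n] ⇑x) p,
        (∀ k < n, B^[n] (⇑x) k = 0) ∧
        (∀ j : ℕ, B^[n] (⇑x) (n + j) =
          w⁻¹ ^ (∑ t ∈ Finset.range n, (j + 1 + t)) * x j) ∧
        ‖(⟨B^[n] ⇑x, hBn⟩ : lp (fun _ : ℕ => 𝕜) p)‖ ≤
          ‖w‖⁻¹ ^ (∑ t ∈ Finset.range n, (t + 1)) * ‖x‖ ∧
        Memℓp (A^[n] (B^[n] ⇑x)) p ∧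
        A^[n] (B^[n] ⇑x) = ⇑x := by
  have hw0 : w ≠ 0 := by
    intro h; rw [h, norm_zero] at hw; linarith
  have hq : 0 < p.toReal := by
    refine ENNReal.toReal_pos ?_ hp'
    have h1 : (1 : ℝ≥0∞) ≤ p := Fact.out
    intro h; rw [h] at h1; exact absurd h1 (by simp)
  -- pointwise formula for B^[n]
  have key : ∀ (n : ℕ) (y : ℕ → 𝕜),
      (∀ k < n, B^[n] y k = 0) ∧
      (∀ j : ℕ, B^[n] y (n + j) = w⁻¹ ^ (∑ t ∈ Finset.range n, (j + 1 + t)) * y j) := by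
    intro n
    induction n with
    | zero =>
      intro y
      exact ⟨fun k hk => absurd hk (Nat.not_lt_zero k), fun j => by simp⟩
    | succ n ih =>
      intro y
      have h1 : B^[n+1] y = B (B^[n] y) := Function.iterate_succ_apply' B n y
      constructor
      · intro k hk
        rw [h1]
        match k, hk with
        | 0, _ => exact hB0 _
        | (m+1), hk =>
          rw [hB, (ih y).1 m (by omega), mul_zero]
      · intro j
        rw [h1]
        have hne : n + 1 + j = (n + j) + 1 := by omega
        rw [hne, hB, (ih y).2 j, ← mul_assoc, ← pow_add]
        congr 2
        rw [Finset.sum_range_succ]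
        omega
  -- A ∘ B = id
  have hAB : ∀ y : ℕ → 𝕜, A (B y) = y := by
    intro y; funext k
    rw [hA, hB, ← mul_assoc, ← mul_pow, mul_inv_cancel₀ hw0, one_pow, one_mul]
  have hABn : ∀ (n : ℕ) (y : ℕ → 𝕜), A^[n] (B^[n] y) = y := by
    intro n
    induction n with
    | zero => intro y; rfl
    | succ n ih =>
      intro y
      rw [Function.iterate_succ_apply A, Function.iterate_succ_apply' B, hAB, ih]
  intro n x
  set q := p.toReal with hqdef
  set c := ‖w‖⁻¹ ^ (∑ t ∈ Finset.range n, (t + 1)) with hcdef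
  have hwinv0 : (0 : ℝ) ≤ ‖w‖⁻¹ := by positivity
  have hwinv1 : ‖w‖⁻¹ ≤ 1 := by
    rw [inv_le_one_iff₀]; right; linarith
  have hc0 : 0 ≤ c := pow_nonneg hwinv0 _
  set f := B^[n] ⇑x with hfdef
  have h0 : ∀ k < n, f k = 0 := (key n ⇑x).1
  have hj : ∀ j : ℕ, f (n + j) = w⁻¹ ^ (∑ t ∈ Finset.range n, (j + 1 + t)) * x j :=
    (key n ⇑x).2
  have bound : ∀ j : ℕ, ‖f (n + j)‖ ≤ c * ‖x j‖ := by
    intro j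
    rw [hj j, norm_mul, norm_pow, norm_inv]
    gcongr
    refine pow_le_pow_of_le_one hwinv0 hwinv1 ?_
    exact Finset.sum_le_sum fun t _ => by omega
  have hsx : Summable fun j => ‖x j‖ ^ q := (lp.memℓp x).summable hq
  have hsc : Summable fun j => (c * ‖x j‖) ^ q := by
    have : (fun j => (c * ‖x j‖) ^ q) = fun j => c ^ q * ‖x j‖ ^ q := by
      funext j; exact Real.mul_rpow hc0 (norm_nonneg _)
    rw [this]; exact hsx.mul_left _
  have hinj : Function.Injective (fun j : ℕ => n + j) := add_right_injective n
  have hsupp : ∀ k ∉ Set.range (fun j : ℕ => n + j), ‖f k‖ ^ q = 0 := by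
    intro k hk
    have hkn : k < n := by
      by_contra h
      exact hk ⟨k - n, show n + (k - n) = k by omega⟩
    rw [h0 k hkn, norm_zero, Real.zero_rpow hq.ne']
  have hscomp : Summable fun j : ℕ => ‖f (n + j)‖ ^ q := by
    refine Summable.of_nonneg_of_le (fun j => Real.rpow_nonneg (norm_nonneg _) _)
      (fun j => Real.rpow_le_rpow (norm_nonneg _) (bound j) hq.le) hsc
  have hsum : Summable fun k => ‖f k‖ ^ q := by
    exact (Function.Injective.summable_iff hinj hsupp).mp hscomp
  have hBn : Memℓp f p := memℓp_gen hsum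
  refine ⟨hBn, h0, hj, ?_, ?_, ?_⟩
  · -- norm bound
    refine lp.norm_le_of_tsum_le hq (mul_nonneg hc0 (norm_nonneg _)) ?_
    have htsum : ∑' k, ‖f k‖ ^ q = ∑' j, ‖f (n + j)‖ ^ q := by
      refine (Function.Injective.tsum_eq hinj ?_).symm
      intro k hk
      by_contra h
      exact Function.mem_support.mp hk (hsupp k h)
    have hle : ∑' k, ‖f k‖ ^ q ≤ (c * ‖x‖) ^ q := by
      rw [htsum]
      calc ∑' j, ‖f (n + j)‖ ^ q ≤ ∑' j, (c * ‖x j‖) ^ q := by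
            exact Summable.tsum_le_tsum (fun j => Real.rpow_le_rpow (norm_nonneg _) (bound j) hq.le) hscomp hsc
        _ = c ^ q * ∑' j, ‖x j‖ ^ q := by
            rw [← tsum_mul_left]
            exact tsum_congr fun j => Real.mul_rpow hc0 (norm_nonneg _)
        _ = c ^ q * ‖x‖ ^ q := by rw [← lp.norm_rpow_eq_tsum hq]
        _ = (c * ‖x‖) ^ q := (Real.mul_rpow hc0 (norm_nonneg _)).symm
    exact hle
  · rw [hABn n ⇑x]; exact lp.memℓp x
  · exact hABn n ⇑x
end

section
/- Let w be a scalar (real or complex) with |w| > 1 and 1 ≤ p < ∞. The weighted backward shift A with domain D(A) = {x ∈ ℓ^p : Ax ∈ ℓ^p} is hypercyclic: there exists x ∈ C^∞(A) := ⋂_{n≥0} D(Aⁿ) such that the orbit {Aⁿx : n ∈ ℤ₊} is dense in ℓ^p. -/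
open scoped ENNReal

namespace RolewiczAux

variable {𝕜 : Type*} [RCLike 𝕜]

/-- Product of weights picked up by `n` applications of the shift starting at coordinate `k`. -/
def Wn (w : 𝕜) (n k : ℕ) : 𝕜 := ∏ i ∈ Finset.range n, w ^ (k + i + 1)

/-- Weighted forward shift by `m` (right inverse of `A^[m]`). -/
def Sm (w : 𝕜) (m : ℕ) (y : ℕ → 𝕜) : ℕ → 𝕜 :=
  fun k => if m ≤ k then (Wn w m (k - m))⁻¹ * y (k - m) else 0

lemma Wn_zero (w : 𝕜) (k : ℕ) : Wn w 0 k = 1 := by simp [Wn]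

lemma Wn_succ (w : 𝕜) (n k : ℕ) : Wn w (n + 1) k = Wn w n k * w ^ (k + n + 1) :=
  Finset.prod_range_succ _ _

lemma Wn_add (w : 𝕜) (a b t : ℕ) : Wn w (b + a) t = Wn w b t * Wn w a (t + b) := by
  rw [Wn, Finset.prod_range_add]
  congr 1
  exact Finset.prod_congr rfl fun i _ => by rw [show t + (b + i) + 1 = t + b + i + 1 by omega]

lemma Wn_ne_zero {w : 𝕜} (hw : w ≠ 0) (n k : ℕ) : Wn w n k ≠ 0 :=
  Finset.prod_ne_zero_iff.2 fun i _ => pow_ne_zero _ hw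

lemma le_norm_Wn {w : 𝕜} (hw : 1 ≤ ‖w‖) (n k : ℕ) : ‖w‖ ^ n ≤ ‖Wn w n k‖ := by
  rw [Wn, norm_prod]
  calc ‖w‖ ^ n = ∏ _i ∈ Finset.range n, ‖w‖ := by rw [Finset.prod_const, Finset.card_range]
    _ ≤ ∏ i ∈ Finset.range n, ‖w ^ (k + i + 1)‖ := by
        refine Finset.prod_le_prod (fun _ _ => by positivity) fun i _ => ?_
        rw [norm_pow]
        calc ‖w‖ = ‖w‖ ^ 1 := (pow_one _).symm
          _ ≤ ‖w‖ ^ (k + i + 1) := pow_le_pow_right₀ hw (by omega)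

lemma norm_Wn_inv_le {w : 𝕜} (hw : 1 ≤ ‖w‖) (n k : ℕ) :
    ‖(Wn w n k)⁻¹‖ ≤ ‖w‖⁻¹ ^ n := by
  have hw0 : (0:ℝ) < ‖w‖ ^ n := by positivity
  rw [norm_inv, inv_pow]
  exact inv_anti₀ hw0 (le_norm_Wn hw n k)

lemma Sm_zero (w : 𝕜) (y : ℕ → 𝕜) : Sm w 0 y = y := by
  funext k
  simp [Sm, Wn_zero]

lemma norm_Sm_le {w : 𝕜} (hw : 1 ≤ ‖w‖) (m : ℕ) (y : ℕ → 𝕜) (k : ℕ) (hk : m ≤ k) :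
    ‖Sm w m y k‖ ≤ ‖w‖⁻¹ ^ m * ‖y (k - m)‖ := by
  rw [Sm, if_pos hk, norm_mul]
  exact mul_le_mul_of_nonneg_right (norm_Wn_inv_le hw m _) (norm_nonneg _)

lemma comp_le {w : 𝕜} (hw : w ≠ 0) {n m : ℕ} (h : n ≤ m) (y : ℕ → 𝕜) (k : ℕ) :
    Wn w n k * Sm w m y (k + n) = Sm w (m - n) y k := by
  by_cases hk : m - n ≤ k
  · have hkn : m ≤ k + n := by omega
    rw [Sm, if_pos hkn, Sm, if_pos hk]
    have ht : k + n - m = k - (m - n) := by omega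
    rw [ht]
    have hWadd : Wn w m (k - (m - n)) =
        Wn w (m - n) (k - (m - n)) * Wn w n (k - (m - n) + (m - n)) := by
      rw [← Wn_add, Nat.sub_add_cancel h]
    rw [Nat.sub_add_cancel hk] at hWadd
    rw [hWadd, mul_inv]
    have h1 := Wn_ne_zero hw n k
    have h2 := Wn_ne_zero hw (m - n) (k - (m - n))
    field_simp
  · have h2 : ¬ m ≤ k + n := by omega
    rw [Sm, if_neg h2, Sm, if_neg hk, mul_zero]

lemma comp_ge {w : 𝕜} (hw : w ≠ 0) {n m : ℕ} (h : m ≤ n) (y : ℕ → 𝕜) (k : ℕ) :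
    Wn w n k * Sm w m y (k + n) = Wn w (n - m) k * y (k + n - m) := by
  have hkn : m ≤ k + n := by omega
  rw [Sm, if_pos hkn]
  have hWadd : Wn w n k = Wn w (n - m) k * Wn w m (k + (n - m)) := by
    rw [← Wn_add, Nat.sub_add_cancel h]
  have ht : k + (n - m) = k + n - m := by omega
  rw [ht] at hWadd
  rw [hWadd]
  have h2 := Wn_ne_zero hw m (k + n - m)
  field_simp

lemma iterate_apply {w : 𝕜} (A : (ℕ → 𝕜) → ℕ → 𝕜)
    (hA : ∀ x k, A x k = w ^ (k + 1) * x (k + 1)) :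
    ∀ (n : ℕ) (z : ℕ → 𝕜) (k : ℕ), A^[n] z k = Wn w n k * z (k + n) := by
  intro n
  induction n with
  | zero => intro z k; simp [Wn_zero]
  | succ n ih =>
    intro z k
    rw [Function.iterate_succ_apply, ih (A z) k, hA, Wn_succ]
    rw [show k + n + 1 = k + (n + 1) by omega]
    ring

variable {p : ℝ≥0∞} [Fact (1 ≤ p)]

lemma p_ne_zero : p ≠ 0 := (lt_of_lt_of_le zero_lt_one Fact.out).ne'

lemma toReal_pos (hp' : p ≠ ∞) : 0 < p.toReal :=
  ENNReal.toReal_pos p_ne_zero hp'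

lemma memℓp_of_fin_support (hp' : p ≠ ∞) {f : ℕ → 𝕜} (N : ℕ) (h : ∀ k, N ≤ k → f k = 0) :
    Memℓp f p := by
  apply memℓp_gen
  refine summable_of_ne_finset_zero (s := Finset.range N) fun k hk => ?_
  rw [h k (by simpa using hk)]
  simp [Real.zero_rpow (toReal_pos hp').ne']

lemma Sm_memℓp (hp' : p ≠ ∞) {w : 𝕜} (hw : 1 ≤ ‖w‖) (m : ℕ) {y : ℕ → 𝕜} (hy : Memℓp y p) :
    Memℓp (Sm w m y) p := by
  have hP := toReal_pos (p := p) hp'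
  apply memℓp_gen
  rw [← summable_nat_add_iff m]
  refine Summable.of_nonneg_of_le (fun k => by positivity) (fun k => ?_)
    ((hy.summable hP).mul_left ((‖w‖⁻¹ ^ m) ^ p.toReal))
  have h1 : ‖Sm w m y (k + m)‖ ≤ ‖w‖⁻¹ ^ m * ‖y k‖ := by
    simpa using norm_Sm_le hw m y (k + m) (by omega)
  calc ‖Sm w m y (k + m)‖ ^ p.toReal ≤ (‖w‖⁻¹ ^ m * ‖y k‖) ^ p.toReal :=
        Real.rpow_le_rpow (norm_nonneg _) h1 hP.le
    _ = (‖w‖⁻¹ ^ m) ^ p.toReal * ‖y k‖ ^ p.toReal :=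
        Real.mul_rpow (by positivity) (norm_nonneg _)

lemma Sm_norm_le (hp' : p ≠ ∞) {w : 𝕜} (hw : 1 ≤ ‖w‖) (m : ℕ) (Y : lp (fun _ : ℕ => 𝕜) p)
    {f : lp (fun _ : ℕ => 𝕜) p} (hf : ⇑f = Sm w m ⇑Y) : ‖f‖ ≤ ‖w‖⁻¹ ^ m * ‖Y‖ := by
  have hP := toReal_pos (p := p) hp'
  refine lp.norm_le_of_forall_sum_le hP (by positivity) fun s => ?_
  have key : ∀ k ∈ s, ‖f k‖ ^ p.toReal ≤
      if m ≤ k then (‖w‖⁻¹ ^ m) ^ p.toReal * ‖Y (k - m)‖ ^ p.toReal else 0 := by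
    intro k _
    by_cases hk : m ≤ k
    · rw [if_pos hk, hf]
      calc ‖Sm w m (⇑Y) k‖ ^ p.toReal ≤ (‖w‖⁻¹ ^ m * ‖Y (k - m)‖) ^ p.toReal :=
            Real.rpow_le_rpow (norm_nonneg _) (norm_Sm_le hw m _ k hk) hP.le
        _ = _ := Real.mul_rpow (by positivity) (norm_nonneg _)
    · rw [if_neg hk, hf]
      have h : Sm w m (⇑Y) k = 0 := by rw [Sm, if_neg hk]
      rw [h]
      simp [Real.zero_rpow hP.ne']
  calc ∑ k ∈ s, ‖f k‖ ^ p.toReal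
      ≤ ∑ k ∈ s, if m ≤ k then (‖w‖⁻¹ ^ m) ^ p.toReal * ‖Y (k - m)‖ ^ p.toReal else 0 :=
        Finset.sum_le_sum key
    _ = ∑ k ∈ s.filter (m ≤ ·), (‖w‖⁻¹ ^ m) ^ p.toReal * ‖Y (k - m)‖ ^ p.toReal :=
        (Finset.sum_filter _ _).symm
    _ = (‖w‖⁻¹ ^ m) ^ p.toReal * ∑ k ∈ s.filter (m ≤ ·), ‖Y (k - m)‖ ^ p.toReal := by
        rw [Finset.mul_sum]
    _ = (‖w‖⁻¹ ^ m) ^ p.toReal * ∑ j ∈ (s.filter (m ≤ ·)).image (· - m), ‖Y j‖ ^ p.toReal := by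
        congr 1
        rw [Finset.sum_image]
        intro a ha b hb hab
        simp only [Finset.coe_filter, Finset.mem_coe, Finset.mem_filter, Set.mem_setOf_eq] at ha hb hab
        omega
    _ ≤ (‖w‖⁻¹ ^ m) ^ p.toReal * ‖Y‖ ^ p.toReal := by
        refine mul_le_mul_of_nonneg_left ?_ (by positivity)
        exact lp.sum_rpow_le_norm_rpow hP Y _
    _ = (‖w‖⁻¹ ^ m * ‖Y‖) ^ p.toReal := (Real.mul_rpow (by positivity) (norm_nonneg _)).symm

/-- coordinate evaluation as a continuous linear map -/
noncomputable def coord (p : ℝ≥0∞) [Fact (1 ≤ p)] (k : ℕ) : lp (fun _ : ℕ => 𝕜) p →L[𝕜] 𝕜 :=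
  LinearMap.mkContinuous
    { toFun := fun f => f k
      map_add' := fun f g => by simp only []; rw [lp.coeFn_add]; rfl
      map_smul' := fun c f => by simp only []; rw [lp.coeFn_smul]; rfl }
    1 (fun f => by simpa using lp.norm_apply_le_norm p_ne_zero f k)

@[simp] lemma coord_apply (k : ℕ) (f : lp (fun _ : ℕ => 𝕜) p) : coord p k f = f k := rfl

lemma memℓp_of_coord_hasSum {g : ℕ → lp (fun _ : ℕ => 𝕜) p}
    (hg : Summable fun j => ‖g j‖) {f : ℕ → 𝕜}
    (hf : ∀ k, HasSum (fun j => g j k) (f k)) :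
    ∃ G : lp (fun _ : ℕ => 𝕜) p, HasSum g G ∧ ⇑G = f := by
  obtain ⟨G, hG⟩ := hg.of_norm
  refine ⟨G, hG, funext fun k => ?_⟩
  exact ((coord p k).hasSum hG).unique (hf k)

lemma single_sub (i : ℕ) (a b : 𝕜) :
    lp.single (E := fun _ : ℕ => 𝕜) p i (a - b) = lp.single p i a - lp.single p i b := by
  apply lp.ext
  funext j
  rw [lp.coeFn_sub, Pi.sub_apply]
  rcases eq_or_ne j i with rfl | hj
  · rw [lp.single_apply_self, lp.single_apply_self, lp.single_apply_self]
  · rw [lp.single_apply_ne _ _ _ hj, lp.single_apply_ne _ _ _ hj, lp.single_apply_ne _ _ _ hj,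
      sub_zero]

lemma continuous_single (hp' : p ≠ ∞) (i : ℕ) :
    Continuous fun a : 𝕜 => lp.single (E := fun _ : ℕ => 𝕜) p i a := by
  have hP := toReal_pos (p := p) hp'
  refine (LipschitzWith.of_dist_le_mul (K := 1) fun a b => ?_).continuous
  rw [dist_eq_norm, ← single_sub, dist_eq_norm, NNReal.coe_one, one_mul]
  exact le_of_eq (lp.norm_single (E := fun _ : ℕ => 𝕜) (pos_iff_ne_zero.2 (p_ne_zero (p := p))) i (a - b))

lemma exists_dense_seq (hp' : p ≠ ∞) :
    ∃ d : ℕ → lp (fun _ : ℕ => 𝕜) p, DenseRange d := by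
  set φ : (N : ℕ) → (Fin N → 𝕜) → lp (fun _ : ℕ => 𝕜) p :=
    fun N c => ∑ i : Fin N, lp.single p (i : ℕ) (c i) with hφ
  have hφcont : ∀ N, Continuous (φ N) := by
    intro N
    apply continuous_finset_sum
    intro i _
    exact (continuous_single hp' (i : ℕ)).comp (continuous_apply i)
  have hsep : TopologicalSpace.IsSeparable (⋃ N, Set.range (φ N)) := by
    rw [TopologicalSpace.isSeparable_iUnion]
    intro N
    rw [← Set.image_univ]
    exact (TopologicalSpace.IsSeparable.of_separableSpace _).image (hφcont N)
  have hd : Dense (⋃ N, Set.range (φ N)) := by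
    intro Z
    refine mem_closure_of_tendsto ((lp.hasSum_single hp' Z).tendsto_sum_nat)
      (Filter.Eventually.of_forall fun N => ?_)
    refine Set.mem_iUnion.2 ⟨N, ⟨fun i => Z (i : ℕ), ?_⟩⟩
    rw [hφ]
    exact (Finset.sum_range fun k => lp.single p k (Z k)).symm
  obtain ⟨c, hcc, hsub⟩ := hsep
  have hdc : Dense c := by
    have h1 : Dense (closure c) := hd.mono hsub
    rwa [dense_closure] at h1
  obtain ⟨d, rfl⟩ := hcc.exists_eq_range (hdc.nonempty)
  exact ⟨d, hdc⟩

end RolewiczAux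

set_option maxHeartbeats 1000000 in
set_option synthInstance.maxHeartbeats 400000 in
open RolewiczAux in
/-- The weighted backward shift `A` (0-based:
`A x k = w ^ (k+1) * x (k+1)`) with `|w| > 1`, with maximal domain
`D(A) = {x ∈ ℓ^p | Ax ∈ ℓ^p}`, is hypercyclic on `ℓ^p` (`1 ≤ p < ∞`): there exists
`x ∈ C^∞(A) = ⋂ₙ D(Aⁿ)` whose orbit `{Aⁿx : n ∈ ℤ₊}` is dense in `ℓ^p`. -/
theorem rolewicz_lp_hypercyclic {𝕜 : Type*} [RCLike 𝕜]
    (w : 𝕜) (hw : 1 < ‖w‖) (p : ℝ≥0∞) [Fact (1 ≤ p)] (hp' : p ≠ ∞)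
    (A : (ℕ → 𝕜) → ℕ → 𝕜) (hA : ∀ x k, A x k = w ^ (k + 1) * x (k + 1)) :
    ∃ (x : lp (fun _ : ℕ => 𝕜) p) (hx : ∀ n : ℕ, Memℓp (A^[n] ⇑x) p),
      Dense (Set.range fun n : ℕ => (⟨A^[n] ⇑x, hx n⟩ : lp (fun _ : ℕ => 𝕜) p)) := by
  classical
  have hw1 : 1 ≤ ‖w‖ := hw.le
  have hw0 : w ≠ 0 := by
    intro h; rw [h, norm_zero] at hw; linarith
  have hP : 0 < p.toReal := toReal_pos hp'
  obtain ⟨d, hd⟩ := exists_dense_seq (𝕜 := 𝕜) (p := p) hp'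
  -- truncations of the dense sequence
  have hNf : ∀ a b : ℕ, ∃ nn : ℕ,
      ‖(∑ k ∈ Finset.range nn, lp.single p k (d a k)) - d a‖ < (2:ℝ)⁻¹ ^ b := by
    intro a b
    have ht := (lp.hasSum_single hp' (d a)).tendsto_sum_nat
    obtain ⟨nn, hnn⟩ := Metric.tendsto_atTop.mp ht ((2:ℝ)⁻¹ ^ b) (by positivity)
    exact ⟨nn, by simpa [dist_eq_norm] using hnn nn le_rfl⟩
  choose Nf hNf using hNf
  set Y : ℕ → lp (fun _ : ℕ => 𝕜) p := fun j =>
    ∑ k ∈ Finset.range (Nf (Nat.unpair j).1 (Nat.unpair j).2), lp.single p k (d (Nat.unpair j).1 k)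
    with hYdef
  set N : ℕ → ℕ := fun j => Nf (Nat.unpair j).1 (Nat.unpair j).2 with hNdef
  have hYcoe : ∀ j k, Y j k = if k ∈ Finset.range (N j) then d (Nat.unpair j).1 k else 0 := by
    intro j k
    rw [hYdef]
    simp only [lp.coeFn_sum, Finset.sum_apply, lp.single_apply, Finset.sum_dite_eq, hNdef, Pi.single_apply, Finset.sum_ite_eq]
  have hYsupp : ∀ j k, N j ≤ k → Y j k = 0 := by
    intro j k hk
    rw [hYcoe, if_neg (by simp; omega)]
  have hYapprox : ∀ a b : ℕ, ‖Y (Nat.pair a b) - d a‖ < (2:ℝ)⁻¹ ^ b := by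
    intro a b
    have h := hNf a b
    simp only [hYdef, Nat.unpair_pair]
    exact h
  -- choose gaps K
  have hK : ∀ j : ℕ, ∃ K : ℕ, (2:ℝ) ^ (j+1) * (‖Y (j+1)‖ + 1) < ‖w‖ ^ K :=
    fun j => pow_unbounded_of_one_lt _ hw
  choose K hK using hK
  set m : ℕ → ℕ := fun j => ∑ i ∈ Finset.range j, (N i + K i + 1) with hmdef
  have hm_succ : ∀ j, m (j+1) = m j + (N j + K j + 1) := fun j => Finset.sum_range_succ _ j
  have hm_le : ∀ {i j : ℕ}, i ≤ j → m i ≤ m j := fun {i j} hij =>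
    Finset.sum_le_sum_of_subset (Finset.range_subset_range.2 hij)
  have hm_ge : ∀ j, j ≤ m j := by
    intro j
    induction j with
    | zero => omega
    | succ n ih => have := hm_succ n; omega
  -- the crucial geometric estimate
  have est : ∀ j r : ℕ, 1 ≤ j → r ≤ m (j-1) → ‖w‖⁻¹ ^ (m j - r) * ‖Y j‖ ≤ (2:ℝ)⁻¹ ^ j := by
    intro j r hj hr
    have hKj : K (j-1) ≤ m j - r := by
      have h1 : m j = m (j-1) + (N (j-1) + K (j-1) + 1) := by
        conv_lhs => rw [show j = (j-1)+1 by omega]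
        exact hm_succ _
      omega
    have hw2 : (2:ℝ) ^ j * (‖Y j‖ + 1) < ‖w‖ ^ K (j-1) := by
      have h := hK (j-1)
      rwa [show j - 1 + 1 = j by omega] at h
    have h3 : ‖w‖⁻¹ ^ (m j - r) ≤ ‖w‖⁻¹ ^ (K (j-1)) :=
      pow_le_pow_of_le_one (by positivity) (inv_le_one_of_one_le₀ hw1) hKj
    have h4 : ‖w‖⁻¹ ^ (K (j-1)) ≤ ((2:ℝ) ^ j * (‖Y j‖ + 1))⁻¹ := by
      rw [inv_pow]
      exact inv_anti₀ (by positivity) hw2.le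
    have hY0 : (0:ℝ) ≤ ‖Y j‖ := norm_nonneg _
    have hfr : ((‖Y j‖ + 1))⁻¹ * ‖Y j‖ ≤ 1 := by
      rw [← div_eq_inv_mul]
      exact (div_le_one (by positivity)).mpr (by linarith)
    calc ‖w‖⁻¹ ^ (m j - r) * ‖Y j‖ ≤ ((2:ℝ) ^ j * (‖Y j‖ + 1))⁻¹ * ‖Y j‖ :=
          mul_le_mul_of_nonneg_right (h3.trans h4) hY0
      _ = (2:ℝ)⁻¹ ^ j * ((‖Y j‖ + 1)⁻¹ * ‖Y j‖) := by
          rw [mul_inv, inv_pow]; ring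
      _ ≤ (2:ℝ)⁻¹ ^ j * 1 := mul_le_mul_of_nonneg_left hfr (by positivity)
      _ = (2:ℝ)⁻¹ ^ j := mul_one _
  -- the blocks u j = S^{m j} (Y j)
  have hu : ∀ j, ∃ U : lp (fun _ : ℕ => 𝕜) p, ⇑U = Sm w (m j) ⇑(Y j) :=
    fun j => ⟨⟨Sm w (m j) ⇑(Y j), Sm_memℓp hp' hw1 _ (lp.memℓp (Y j))⟩, rfl⟩
  choose u hucoe using hu
  have hu_norm : ∀ j, 1 ≤ j → ‖u j‖ ≤ (2:ℝ)⁻¹ ^ j := by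
    intro j hj
    have h1 : ‖u j‖ ≤ ‖w‖⁻¹ ^ (m j) * ‖Y j‖ := Sm_norm_le hp' hw1 _ _ (hucoe j)
    have h2 := est j 0 hj (Nat.zero_le _)
    rw [Nat.sub_zero] at h2
    exact h1.trans h2
  have hgeom : Summable fun j : ℕ => (2:ℝ)⁻¹ ^ j :=
    summable_geometric_of_lt_one (by norm_num) (by norm_num)
  have hu_summ : Summable fun j => ‖u j‖ := by
    rw [← summable_nat_add_iff 1]
    refine Summable.of_nonneg_of_le (fun j => norm_nonneg _)
      (fun j => hu_norm (j+1) (by omega)) ?_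
    exact (summable_nat_add_iff 1).2 hgeom
  obtain ⟨x, hxsum⟩ := hu_summ.of_norm
  have hx_coord : ∀ k, HasSum (fun j => u j k) (x k) := fun k => by
    simpa using (coord p k).hasSum hxsum
  -- the pieces of A^[n] x
  have hgex : ∀ n j : ℕ, ∃ G : lp (fun _ : ℕ => 𝕜) p,
      (∀ k, G k = Wn w n k * u j (k + n)) ∧
      (n ≤ m j → ‖G‖ ≤ ‖w‖⁻¹ ^ (m j - n) * ‖Y j‖) := by
    intro n j
    rcases le_or_gt n (m j) with h | h
    · refine ⟨⟨Sm w (m j - n) ⇑(Y j), Sm_memℓp hp' hw1 _ (lp.memℓp (Y j))⟩,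
        fun k => ?_, fun _ => Sm_norm_le hp' hw1 _ _ rfl⟩
      show Sm w (m j - n) (⇑(Y j)) k = _
      rw [hucoe j, ← comp_le hw0 h]
    · have hfin : ∀ k, N j ≤ k → Wn w (n - m j) k * (Y j) (k + n - m j) = 0 := by
        intro k hk
        rw [hYsupp j _ (by omega), mul_zero]
      refine ⟨⟨fun k => Wn w (n - m j) k * (Y j) (k + n - m j),
        memℓp_of_fin_support hp' (N j) hfin⟩, fun k => ?_, fun hn => absurd hn (by omega)⟩
      show Wn w (n - m j) k * (Y j) (k + n - m j) = _
      rw [hucoe j, comp_ge hw0 h.le]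
  choose g hgcoe hgnorm using hgex
  have hgbound : ∀ n j : ℕ, 1 ≤ j → n ≤ m (j-1) → ‖g n j‖ ≤ (2:ℝ)⁻¹ ^ j := by
    intro n j hj hn
    have h1 : n ≤ m j := hn.trans (hm_le (by omega))
    exact (hgnorm n j h1).trans (est j n hj hn)
  have hgsumm : ∀ n, Summable fun j => ‖g n j‖ := by
    intro n
    rw [← summable_nat_add_iff (n+1)]
    have hcmp : Summable fun j : ℕ => (2:ℝ)⁻¹ ^ (j + (n+1)) := (summable_nat_add_iff (n+1)).2 hgeom
    exact Summable.of_nonneg_of_le (fun j => norm_nonneg _)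
      (fun j => hgbound n (j + (n+1)) (by omega)
        (le_trans (by omega : n ≤ j + (n+1) - 1) (hm_ge _))) hcmp
  have hAiter := iterate_apply A hA
  have hpt : ∀ n k, HasSum (fun j => g n j k) (A^[n] ⇑x k) := by
    intro n k
    rw [hAiter n (⇑x) k]
    have h2 := (hx_coord (k+n)).mul_left (Wn w n k)
    have hfe : (fun j => g n j k) = fun j => Wn w n k * u j (k + n) :=
      funext fun j => hgcoe n j k
    rw [hfe]
    exact h2
  have hGex : ∀ n, ∃ G : lp (fun _ : ℕ => 𝕜) p, HasSum (g n) G ∧ ⇑G = A^[n] ⇑x :=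
    fun n => memℓp_of_coord_hasSum (hgsumm n) (hpt n)
  choose G hGsum hGcoe using hGex
  have hx_mem : ∀ n, Memℓp (A^[n] ⇑x) p := fun n => (hGcoe n) ▸ lp.memℓp (G n)
  refine ⟨x, hx_mem, ?_⟩
  have hFG : ∀ n, (⟨A^[n] ⇑x, hx_mem n⟩ : lp (fun _ : ℕ => 𝕜) p) = G n :=
    fun n => Subtype.ext (hGcoe n).symm
  -- key estimate: ‖A^[m j] x - Y j‖ ≤ 2⁻¹ ^ j
  have hkey : ∀ j, ‖G (m j) - Y j‖ ≤ (2:ℝ)⁻¹ ^ j := by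
    intro j
    have h0 : ∀ i, i < j → g (m j) i = 0 := by
      intro i hij
      apply lp.ext
      funext k
      rw [lp.coeFn_zero, Pi.zero_apply, hgcoe, hucoe i]
      have hk : m i ≤ k + m j := le_trans (hm_le hij.le) (by omega)
      rw [Sm, if_pos hk]
      have hz : (Y i) (k + m j - m i) = 0 := by
        apply hYsupp
        have h1 := hm_succ i
        have h2 : m (i+1) ≤ m j := hm_le hij
        omega
      rw [hz, mul_zero, mul_zero]
    have hYj : g (m j) j = Y j := by
      apply lp.ext
      funext k
      rw [hgcoe, hucoe j, comp_le hw0 le_rfl, Nat.sub_self, Sm_zero]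
    have hsum := hGsum (m j)
    have hsplit := Summable.sum_add_tsum_nat_add (j+1) hsum.summable
    have hfirst : ∑ i ∈ Finset.range (j+1), g (m j) i = Y j := by
      rw [Finset.sum_eq_single_of_mem j (Finset.self_mem_range_succ j)]
      · exact hYj
      · intro i hi hij
        exact h0 i (by simp only [Finset.mem_range] at hi; omega)
    rw [hfirst, hsum.tsum_eq] at hsplit
    have hG_eq : G (m j) - Y j = ∑' i, g (m j) (i + (j+1)) := by
      rw [← hsplit]; abel
    rw [hG_eq]
    have htail_summ : Summable fun i => ‖g (m j) (i + (j+1))‖ :=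
      (summable_nat_add_iff (j+1)).2 (hgsumm (m j))
    have htail_bound : ∀ i : ℕ, ‖g (m j) (i + (j+1))‖ ≤ (2:ℝ)⁻¹ ^ (i + (j+1)) := by
      intro i
      refine hgbound (m j) (i + (j+1)) (by omega) ?_
      exact le_trans (hm_le (by omega : j ≤ i + (j+1) - 1)) le_rfl
    calc ‖∑' i, g (m j) (i + (j+1))‖ ≤ ∑' i, ‖g (m j) (i + (j+1))‖ :=
          norm_tsum_le_tsum_norm htail_summ
      _ ≤ ∑' i, (2:ℝ)⁻¹ ^ (i + (j+1)) := by
          refine Summable.tsum_le_tsum htail_bound htail_summ ?_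
          exact (summable_nat_add_iff (j+1)).2 hgeom
      _ = (2:ℝ)⁻¹ ^ j := by
          have h1 : ∀ i : ℕ, (2:ℝ)⁻¹ ^ (i + (j+1)) = (2:ℝ)⁻¹ ^ i * (2:ℝ)⁻¹ ^ (j+1) :=
            fun i => pow_add _ _ _
          rw [tsum_congr h1, tsum_mul_right,
            tsum_geometric_of_lt_one (by norm_num) (by norm_num), pow_succ]
          norm_num
          ring
  -- conclude density
  have hdr : DenseRange (fun n : ℕ => (⟨A^[n] ⇑x, hx_mem n⟩ : lp (fun _ : ℕ => 𝕜) p)) := by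
    rw [Metric.denseRange_iff]
    intro z r hr
    obtain ⟨a, ha⟩ := Metric.denseRange_iff.mp hd z (r/4) (by positivity)
    obtain ⟨b, hb⟩ := exists_pow_lt_of_lt_one (show (0:ℝ) < r/4 by positivity)
      (show (2:ℝ)⁻¹ < 1 by norm_num)
    refine ⟨m (Nat.pair a b), ?_⟩
    set j := Nat.pair a b with hj
    rw [dist_eq_norm, hFG]
    have hjb : (2:ℝ)⁻¹ ^ j ≤ (2:ℝ)⁻¹ ^ b :=
      pow_le_pow_of_le_one (by norm_num) (by norm_num) (Nat.right_le_pair a b)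
    have h1 : ‖z - d a‖ < r/4 := by rwa [← dist_eq_norm]
    have h2 : ‖d a - Y j‖ < (2:ℝ)⁻¹ ^ b := by
      rw [norm_sub_rev]
      exact hYapprox a b
    have h3 : ‖Y j - G (m j)‖ ≤ (2:ℝ)⁻¹ ^ j := by
      rw [norm_sub_rev]
      exact hkey j
    have htri : ‖z - G (m j)‖ ≤ ‖z - d a‖ + (‖d a - Y j‖ + ‖Y j - G (m j)‖) :=
      calc ‖z - G (m j)‖ = ‖(z - d a) + ((d a - Y j) + (Y j - G (m j)))‖ := by abel_nf
        _ ≤ _ := (norm_add_le _ _).trans (by gcongr; exact norm_add_le _ _)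
    have h4 : ‖Y j - G (m j)‖ ≤ (2:ℝ)⁻¹ ^ b := h3.trans hjb
    linarith
  exact hdr
end

section
/- Let w be a scalar (real or complex) with |w| > 1. The weighted backward shift A with domain D(A) = {x ∈ c₀ : Ax ∈ c₀} is hypercyclic: there exists x ∈ C^∞(A) := ⋂_{n≥0} D(Aⁿ) such that the orbit {Aⁿx : n ∈ ℤ₊} is dense in c₀. -/
/-- A vanishing sequence, packaged as an element of `c₀ = C₀(ℕ, 𝕜)` (sup norm). -/
noncomputable def toC0 {𝕜 : Type*} [RCLike 𝕜] (x : ℕ → 𝕜)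
    (h : Filter.Tendsto x Filter.atTop (nhds 0)) : ZeroAtInftyContinuousMap ℕ 𝕜 :=
  ⟨⟨x, continuous_of_discreteTopology⟩, by simpa [Filter.cocompact_eq_cofinite, Nat.cofinite_eq_atTop] using h⟩

namespace Rolewicz

/-- Exponent of the iterated shift: `E n k = (k+1)+(k+2)+...+(k+n)`. -/
def E : ℕ → ℕ → ℕ
  | 0, _ => 0
  | n+1, k => E n k + (k + n + 1)

lemma E_succ_right (n k : ℕ) : E n (k+1) = E n k + n := by
  induction n with
  | zero => rfl
  | succ n ih => simp only [E, ih]; omega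

lemma E_key (m n t : ℕ) : E (n + m) t = E n (t + m) + m * t + E m 0 := by
  induction m with
  | zero => simp [E]
  | succ m ih =>
    have h1 : n + (m+1) = (n+m)+1 := rfl
    have h2 : t + (m+1) = (t+m)+1 := rfl
    rw [h1, h2]
    simp only [E, ih, E_succ_right]
    ring

lemma le_E_zero (m : ℕ) : m ≤ E m 0 := by
  induction m with
  | zero => simp [E]
  | succ m ih => simp only [E]; omega

variable (𝕜 : Type*) [RCLike 𝕜]

noncomputable def u : ℕ → 𝕜 := TopologicalSpace.denseSeq 𝕜

def code (j : ℕ) : List ℕ := Denumerable.ofNat (List ℕ) (Nat.unpair j).2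

noncomputable def F (j k : ℕ) : 𝕜 := ((code j).map (u 𝕜)).getD k 0

noncomputable def S (j : ℕ) : ℝ := ((code j).map (fun i => ‖u 𝕜 i‖)).sum

def N (j : ℕ) : ℕ := (code j).length

lemma S_nonneg (j : ℕ) : 0 ≤ S 𝕜 j := by
  refine List.sum_nonneg ?_
  intro x hx
  simp only [List.mem_map] at hx
  obtain ⟨i, _, rfl⟩ := hx
  exact norm_nonneg _

lemma norm_F_le (j k : ℕ) : ‖F 𝕜 j k‖ ≤ S 𝕜 j := by
  unfold F
  by_cases h : k < ((code j).map (u 𝕜)).length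
  · rw [List.getD_eq_getElem _ _ h]
    rw [List.getElem_map]
    refine List.single_le_sum ?_ _ ?_
    · intro x hx
      simp only [List.mem_map] at hx
      obtain ⟨i, _, rfl⟩ := hx
      exact norm_nonneg _
    · exact List.mem_map.mpr ⟨_, List.getElem_mem _, rfl⟩
  · rw [List.getD_eq_default _ _ (by omega)]
    simpa using S_nonneg 𝕜 j

lemma F_eq_zero_of_le {j k : ℕ} (h : N j ≤ k) : F 𝕜 j k = 0 := by
  unfold F
  rw [List.getD_eq_default]
  simpa [N] using h

variable {𝕜}

lemma exists_pow_gt (w : 𝕜) (hw : 1 < ‖w‖) (c : ℝ) : ∃ t : ℕ, c < ‖w‖ ^ t :=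
  pow_unbounded_of_one_lt c hw

noncomputable def d (w : 𝕜) (hw : 1 < ‖w‖) (j : ℕ) : ℕ :=
  max (N j + 1) (exists_pow_gt w hw (2 ^ (j+1) * S 𝕜 (j+1))).choose

lemma N_lt_d (w : 𝕜) (hw : 1 < ‖w‖) (j : ℕ) : N j + 1 ≤ d w hw j := le_max_left _ _

lemma d_pow (w : 𝕜) (hw : 1 < ‖w‖) (j : ℕ) :
    2 ^ (j+1) * S 𝕜 (j+1) ≤ ‖w‖ ^ d w hw j := by
  refine le_trans (le_of_lt (exists_pow_gt w hw (2 ^ (j+1) * S 𝕜 (j+1))).choose_spec) ?_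
  exact pow_le_pow_right₀ (le_of_lt hw) (le_max_right _ _)

noncomputable def nn (w : 𝕜) (hw : 1 < ‖w‖) : ℕ → ℕ
  | 0 => 0
  | j+1 => nn w hw j + d w hw j

lemma nn_succ (w : 𝕜) (hw : 1 < ‖w‖) (j : ℕ) :
    nn w hw (j+1) = nn w hw j + d w hw j := rfl

lemma self_le_nn (w : 𝕜) (hw : 1 < ‖w‖) (j : ℕ) : j ≤ nn w hw j := by
  induction j with
  | zero => simp [nn]
  | succ j ih => have := N_lt_d w hw j; rw [nn_succ]; omega

lemma nn_mono (w : 𝕜) (hw : 1 < ‖w‖) : Monotone (nn w hw) := by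
  refine monotone_nat_of_le_succ fun j => ?_
  rw [nn_succ]; omega

noncomputable def J (w : 𝕜) (hw : 1 < ‖w‖) (k : ℕ) : ℕ :=
  Nat.findGreatest (fun j => nn w hw j ≤ k) k

lemma nn_J_le (w : 𝕜) (hw : 1 < ‖w‖) (k : ℕ) : nn w hw (J w hw k) ≤ k :=
  Nat.findGreatest_spec (P := fun j => nn w hw j ≤ k) (Nat.zero_le k) (by simp [nn])

lemma le_J (w : 𝕜) (hw : 1 < ‖w‖) {j k : ℕ} (h : nn w hw j ≤ k) : j ≤ J w hw k :=
  Nat.le_findGreatest (le_trans (self_le_nn w hw j) h) h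

lemma J_eq (w : 𝕜) (hw : 1 < ‖w‖) {j k : ℕ} (h1 : nn w hw j ≤ k)
    (h2 : k < nn w hw (j+1)) : J w hw k = j := by
  refine le_antisymm ?_ (le_J w hw h1)
  by_contra h
  push_neg at h
  have h3 := nn_mono w hw (show j + 1 ≤ J w hw k from h)
  have := nn_J_le w hw k
  omega

/-- The hypercyclic vector, defined coordinatewise by disjoint blocks. -/
noncomputable def xx (w : 𝕜) (hw : 1 < ‖w‖) (k : ℕ) : 𝕜 :=
  if k < nn w hw (J w hw k) + N (J w hw k) then
    F 𝕜 (J w hw k) (k - nn w hw (J w hw k)) *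
      (w ^ E (nn w hw (J w hw k)) (k - nn w hw (J w hw k)))⁻¹
  else 0

lemma w_ne_zero {w : 𝕜} (hw : 1 < ‖w‖) : w ≠ 0 := by
  intro h; rw [h, norm_zero] at hw; linarith

/-- Exact recovery on block `j`. -/
lemma recover (w : 𝕜) (hw : 1 < ‖w‖) (j k : ℕ) (hk : k < N j) :
    w ^ E (nn w hw j) k * xx w hw (k + nn w hw j) = F 𝕜 j k := by
  have hNd := N_lt_d w hw j
  have hJ : J w hw (k + nn w hw j) = j := by
    refine J_eq w hw (by omega) ?_
    rw [nn_succ]; omega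
  have hsub : k + nn w hw j - nn w hw j = k := by omega
  unfold xx
  rw [hJ, hsub, if_pos (by omega)]
  have hw0 : (w : 𝕜) ^ E (nn w hw j) k ≠ 0 := pow_ne_zero _ (w_ne_zero hw)
  field_simp

/-- The smallness bound for each coordinate of an iterate. -/
lemma bound (w : 𝕜) (hw : 1 < ‖w‖) (n k : ℕ)
    (hn : n ≤ nn w hw (J w hw (k + n))) :
    ‖w ^ E n k * xx w hw (k + n)‖ ≤
      S 𝕜 (J w hw (k + n)) * (‖w‖ ^ (nn w hw (J w hw (k + n)) - n))⁻¹ := by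
  set i := J w hw (k + n) with hi
  have hKi : nn w hw i ≤ k + n := nn_J_le w hw (k + n)
  have hRHS0 : (0:ℝ) ≤ S 𝕜 i * (‖w‖ ^ (nn w hw i - n))⁻¹ :=
    mul_nonneg (S_nonneg 𝕜 i) (inv_nonneg.mpr (pow_nonneg (norm_nonneg w) _))
  unfold xx
  rw [← hi]
  by_cases h : k + n < nn w hw i + N i
  swap
  · rw [if_neg h, mul_zero, norm_zero]; exact hRHS0
  rw [if_pos h]
  set t := k + n - nn w hw i with ht
  set m := nn w hw i - n with hm
  have hk : k = t + m := by omega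
  have hE : E (nn w hw i) t = E n k + (m * t + E m 0) := by
    have h1 : nn w hw i = n + m := by omega
    rw [h1, E_key, ← hk]
    omega
  rw [hE, pow_add]
  have hw0 : (w : 𝕜) ≠ 0 := w_ne_zero hw
  have hred : w ^ E n k * (F 𝕜 i t * (w ^ E n k * w ^ (m * t + E m 0))⁻¹)
      = F 𝕜 i t * (w ^ (m * t + E m 0))⁻¹ := by
    field_simp
  rw [hred, norm_mul, norm_inv, norm_pow]
  have h1 : (‖w‖ ^ (m * t + E m 0))⁻¹ ≤ (‖w‖ ^ m)⁻¹ := by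
    apply inv_anti₀ (pow_pos (by linarith) m)
    exact pow_le_pow_right₀ (le_of_lt hw) (by have := le_E_zero m; omega)
  exact mul_le_mul (norm_F_le 𝕜 i t) h1
    (inv_nonneg.mpr (pow_nonneg (norm_nonneg w) _)) (S_nonneg 𝕜 i)

/-- Refined bound using the growth condition on `d`. -/
lemma bound2 (w : 𝕜) (hw : 1 < ‖w‖) (n k : ℕ)
    (hi : 1 ≤ J w hw (k + n)) (hn : n ≤ nn w hw (J w hw (k + n) - 1)) :
    ‖w ^ E n k * xx w hw (k + n)‖ ≤ ((2:ℝ) ^ J w hw (k + n))⁻¹ := by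
  set i := J w hw (k + n) with hidef
  have hn' : n ≤ nn w hw i := le_trans hn (nn_mono w hw (by omega))
  have hb := bound w hw n k hn'
  rw [← hidef] at hb
  have hii : i - 1 + 1 = i := by omega
  have hdp := d_pow w hw (i - 1)
  rw [hii] at hdp
  have hd : d w hw (i - 1) ≤ nn w hw i - n := by
    have hs := nn_succ w hw (i-1)
    rw [hii] at hs
    omega
  have hwpos : (0:ℝ) < ‖w‖ := by linarith
  have h2pos : (0:ℝ) < 2 ^ i := by positivity
  rcases (S_nonneg 𝕜 i).eq_or_lt with hS | hS
  · refine le_trans hb ?_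
    rw [← hS, zero_mul]
    positivity
  · refine le_trans hb ?_
    have h1 : ‖w‖ ^ d w hw (i-1) ≤ ‖w‖ ^ (nn w hw i - n) :=
      pow_le_pow_right₀ (le_of_lt hw) hd
    have h2 : (2:ℝ) ^ i * S 𝕜 i ≤ ‖w‖ ^ (nn w hw i - n) := le_trans hdp h1
    have h3 : (‖w‖ ^ (nn w hw i - n))⁻¹ ≤ ((2:ℝ) ^ i * S 𝕜 i)⁻¹ :=
      inv_anti₀ (by positivity) h2
    calc S 𝕜 i * (‖w‖ ^ (nn w hw i - n))⁻¹
        ≤ S 𝕜 i * ((2:ℝ) ^ i * S 𝕜 i)⁻¹ :=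
          mul_le_mul_of_nonneg_left h3 (le_of_lt hS)
      _ = ((2:ℝ) ^ i)⁻¹ := by field_simp

/-- Each orbit point is uniformly close to its target finite sequence. -/
lemma density_est (w : 𝕜) (hw : 1 < ‖w‖) (j k : ℕ) :
    ‖w ^ E (nn w hw j) k * xx w hw (k + nn w hw j) - F 𝕜 j k‖ ≤ ((2:ℝ) ^ (j+1))⁻¹ := by
  set K := k + nn w hw j with hK
  set i := J w hw K with hidef
  have hij : j ≤ i := le_J w hw (by omega)
  have hKi : nn w hw i ≤ K := nn_J_le w hw K
  rcases eq_or_lt_of_le hij with hji | hji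
  · -- i = j
    by_cases hk : k < N j
    · rw [recover w hw j k hk, sub_self, norm_zero]
      positivity
    · push_neg at hk
      have hF : F 𝕜 j k = 0 := F_eq_zero_of_le 𝕜 hk
      have hxx : xx w hw K = 0 := by
        unfold xx
        rw [if_neg]
        rw [← hidef, ← hji]
        omega
      rw [hxx, mul_zero, hF, sub_zero, norm_zero]
      positivity
  · -- i > j
    have hd := N_lt_d w hw j
    have hnn : nn w hw (j+1) ≤ nn w hw i := nn_mono w hw hji
    rw [nn_succ] at hnn
    have hkN : N j ≤ k := by omega
    have hF : F 𝕜 j k = 0 := F_eq_zero_of_le 𝕜 hkN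
    rw [hF, sub_zero]
    have hb := bound2 w hw (nn w hw j) k (show 1 ≤ J w hw K by omega)
      (show nn w hw j ≤ nn w hw (J w hw K - 1) from by
        rw [← hidef]; exact nn_mono w hw (show j ≤ i - 1 by omega))
    refine le_trans hb ?_
    rw [← hidef]
    apply inv_anti₀ (by positivity)
    exact pow_le_pow_right₀ (by norm_num) (by omega)

/-- Every iterate tends to zero coordinatewise. -/
lemma tendsto_iterate (w : 𝕜) (hw : 1 < ‖w‖) (n : ℕ) :
    Filter.Tendsto (fun k => w ^ E n k * xx w hw (k + n)) Filter.atTop (nhds 0) := by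
  rw [NormedAddCommGroup.tendsto_nhds_zero]
  intro ε hε
  obtain ⟨a, ha⟩ := exists_pow_lt_of_lt_one hε (by norm_num : (1:ℝ)/2 < 1)
  set i₀ := max a (n + 1) with hi₀
  rw [Filter.eventually_atTop]
  refine ⟨nn w hw i₀, fun k hk => ?_⟩
  set i := J w hw (k + n) with hidef
  have hii₀ : i₀ ≤ i := le_J w hw (by omega)
  have hi1 : 1 ≤ i := by omega
  have hni : n ≤ nn w hw (i - 1) := by
    have h1 : n ≤ i - 1 := by omega
    exact le_trans h1 (self_le_nn w hw _)
  have hb := bound2 w hw n k hi1 hni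
  rw [← hidef] at hb
  refine lt_of_le_of_lt hb ?_
  have h1 : ((2:ℝ) ^ i)⁻¹ ≤ ((2:ℝ) ^ a)⁻¹ := by
    apply inv_anti₀ (by positivity)
    exact pow_le_pow_right₀ (by norm_num) (by omega)
  refine lt_of_le_of_lt h1 ?_
  calc ((2:ℝ) ^ a)⁻¹ = ((1:ℝ)/2) ^ a := by
        rw [div_pow, one_pow, one_div]
    _ < ε := ha

end Rolewicz

/-- The weighted backward shift `A` (0-based:
`A x k = w ^ (k+1) * x (k+1)`) with `|w| > 1`, with maximal domain
`D(A) = {x ∈ c₀ | Ax ∈ c₀}`, is hypercyclic on `c₀` (sup norm): there exists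
`x ∈ C^∞(A) = ⋂ₙ D(Aⁿ)` whose orbit `{Aⁿx : n ∈ ℤ₊}` is dense in `c₀`. -/
theorem rolewicz_c0_hypercyclic {𝕜 : Type*} [RCLike 𝕜]
    (w : 𝕜) (hw : 1 < ‖w‖)
    (A : (ℕ → 𝕜) → ℕ → 𝕜) (hA : ∀ x k, A x k = w ^ (k + 1) * x (k + 1)) :
    ∃ (x : ZeroAtInftyContinuousMap ℕ 𝕜)
      (hx : ∀ n : ℕ, Filter.Tendsto (A^[n] ⇑x) Filter.atTop (nhds 0)),
      Dense (Set.range fun n : ℕ => toC0 (A^[n] ⇑x) (hx n)) := by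
  classical
  have hAn : ∀ (n : ℕ) (v : ℕ → 𝕜) (k : ℕ),
      A^[n] v k = w ^ Rolewicz.E n k * v (k + n) := by
    intro n
    induction n with
    | zero => intro v k; simp [Rolewicz.E]
    | succ n ih =>
      intro v k
      rw [Function.iterate_succ_apply, ih (A v) k, hA]
      show _ = w ^ (Rolewicz.E n k + (k + n + 1)) * v (k + n + 1)
      rw [pow_add]; ring
  set xs := Rolewicz.xx w hw with hxs
  have hx : ∀ n : ℕ, Filter.Tendsto (A^[n] xs) Filter.atTop (nhds 0) := by
    intro n
    refine (Rolewicz.tendsto_iterate w hw n).congr ?_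
    intro k
    exact (hAn n xs k).symm
  have h0 : Filter.Tendsto xs Filter.atTop (nhds 0) := by simpa using hx 0
  refine ⟨toC0 xs h0, hx, ?_⟩
  refine Metric.denseRange_iff.mpr ?_
  intro y r hr
  have h3 : (0:ℝ) < r/3 := by linarith
  have hy : Filter.Tendsto ⇑y Filter.atTop (nhds 0) := by
    have := zero_at_infty y
    rwa [Filter.cocompact_eq_cofinite, Nat.cofinite_eq_atTop] at this
  obtain ⟨N₀, hN₀⟩ := Filter.eventually_atTop.mp
    (NormedAddCommGroup.tendsto_nhds_zero.mp hy (r/3) h3)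
  have hchoice : ∀ k : ℕ, ∃ i : ℕ, ‖Rolewicz.u 𝕜 i - y k‖ < r/3 := by
    intro k
    obtain ⟨i, hi⟩ := Metric.denseRange_iff.mp
      (TopologicalSpace.denseRange_denseSeq 𝕜) (y k) (r/3) h3
    exact ⟨i, by rwa [← dist_eq_norm, dist_comm]⟩
  choose c hc using hchoice
  set l : List ℕ := (List.range N₀).map c with hl
  obtain ⟨a, ha⟩ := exists_pow_lt_of_lt_one h3 (by norm_num : (1:ℝ)/2 < 1)
  set j := Nat.pair a (Encodable.encode l) with hj
  have hcode : Rolewicz.code j = l := by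
    simp [Rolewicz.code, hj, Nat.unpair_pair, Denumerable.ofNat_encode]
  have happrox : ∀ k, ‖Rolewicz.F 𝕜 j k - y k‖ ≤ r/3 := by
    intro k
    unfold Rolewicz.F
    rw [hcode]
    by_cases hk : k < N₀
    · have hlen : k < (l.map (Rolewicz.u 𝕜)).length := by simp [hl, hk]
      rw [List.getD_eq_getElem _ _ hlen]
      simp only [hl, List.getElem_map, List.getElem_range]
      exact le_of_lt (hc k)
    · rw [List.getD_eq_default _ _ (by simp [hl]; omega)]
      push_neg at hk
      have := hN₀ k hk
      rw [zero_sub, norm_neg]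
      linarith
  have hja : a ≤ j := Nat.left_le_pair _ _
  have hpow : ((2:ℝ) ^ (j+1))⁻¹ ≤ r/3 := by
    have h1 : ((2:ℝ) ^ (j+1))⁻¹ ≤ ((2:ℝ) ^ a)⁻¹ := by
      apply inv_anti₀ (by positivity)
      exact pow_le_pow_right₀ (by norm_num) (by omega)
    have h2 : ((2:ℝ)^a)⁻¹ = ((1:ℝ)/2)^a := by
      rw [div_pow, one_pow, one_div]
    rw [h2] at h1
    linarith
  refine ⟨Rolewicz.nn w hw j, ?_⟩
  rw [dist_eq_norm]
  have hnorm : ‖y - toC0 (A^[Rolewicz.nn w hw j] ⇑(toC0 xs h0))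
      (hx (Rolewicz.nn w hw j))‖ ≤ r/3 + r/3 := by
    rw [← ZeroAtInftyContinuousMap.norm_toBCF_eq_norm]
    refine (BoundedContinuousFunction.norm_le (by linarith)).mpr ?_
    intro k
    show ‖y k - A^[Rolewicz.nn w hw j] xs k‖ ≤ r/3 + r/3
    rw [hAn]
    have h1 := Rolewicz.density_est w hw j k
    have h2 := happrox k
    rw [← hxs] at h1
    calc ‖y k - w ^ Rolewicz.E (Rolewicz.nn w hw j) k * xs (k + Rolewicz.nn w hw j)‖
        = ‖(w ^ Rolewicz.E (Rolewicz.nn w hw j) k * xs (k + Rolewicz.nn w hw j)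
            - Rolewicz.F 𝕜 j k) + (Rolewicz.F 𝕜 j k - y k)‖ := by
          rw [norm_sub_rev]; ring_nf
      _ ≤ ‖w ^ Rolewicz.E (Rolewicz.nn w hw j) k * xs (k + Rolewicz.nn w hw j)
            - Rolewicz.F 𝕜 j k‖ + ‖Rolewicz.F 𝕜 j k - y k‖ := norm_add_le _ _
      _ ≤ ((2:ℝ) ^ (j+1))⁻¹ + r/3 := add_le_add h1 h2
      _ ≤ r/3 + r/3 := add_le_add hpow le_rfl
  linarith
end

section
/- Let w be a scalar with |w| > 1, 1 ≤ p < ∞, N ∈ ℕ, and x₁,…,x_N arbitrary scalars. Define the sequence x by x_{mN+j} = w^{-[(mN+j−1)+(mN+j−2)+⋯+j]} x_j for m ∈ ℤ₊ and j = 1,…,N (so the first block is x₁,…,x_N and each subsequent block repeats it with the indicated weights). Then x ∈ ℓ^p, x ∈ D(A^N), and A^N x = x; that is, x is a periodic point of A. -/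
open scoped ENNReal

/-- Let `|w| > 1`, `1 ≤ p < ∞`, `N ≥ 1`, and let `c 0, …, c (N-1)` be
arbitrary scalars. The sequence `x` defined blockwise (0-based) by
`x (m*N + j) = w^{-[(mN+j-1)+(mN+j-2)+⋯+(j+1)]} * c j` for `m ∈ ℤ₊`, `j < N`
(the paper's `x_{mN+j} = w^{-[(mN+j-1)+⋯+j]} x_j`, 1-based) belongs to `ℓ^p`,
lies in `D(A^N)`, and satisfies `A^N x = x`, i.e. `x` is a periodic point of the
weighted backward shift `A` (0-based: `A x k = w ^ (k+1) * x (k+1)`). -/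
theorem rolewicz_lp_periodic_point {𝕜 : Type*} [RCLike 𝕜]
    (w : 𝕜) (hw : 1 < ‖w‖) (p : ℝ≥0∞) (hp : 1 ≤ p) (hp' : p ≠ ∞)
    (A : (ℕ → 𝕜) → ℕ → 𝕜) (hA : ∀ x k, A x k = w ^ (k + 1) * x (k + 1))
    (N : ℕ) (hN : 0 < N) (c : Fin N → 𝕜)
    (x : ℕ → 𝕜)
    (hx : ∀ (m : ℕ) (j : Fin N),
      x (m * N + ↑j) = w⁻¹ ^ (∑ t ∈ Finset.range (m * N), (↑j + 1 + t)) * c j) :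
    Memℓp x p ∧ Memℓp (A^[N] x) p ∧ A^[N] x = x := by
  have hw0 : w ≠ 0 := by
    intro h; rw [h, norm_zero] at hw; linarith
  have hnw0 : (0:ℝ) < ‖w‖ := lt_trans zero_lt_one hw
  -- iterate formula
  have hiter : ∀ (n : ℕ) (y : ℕ → 𝕜) (k : ℕ),
      A^[n] y k = w ^ (∑ t ∈ Finset.range n, (k + 1 + t)) * y (k + n) := by
    intro n
    induction n with
    | zero => intro y k; simp
    | succ n ih =>
      intro y k
      rw [Function.iterate_succ', Function.comp_apply, hA, ih]
      have hsum : ∑ t ∈ Finset.range (n + 1), (k + 1 + t)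
          = (k + 1) + ∑ t ∈ Finset.range n, (k + 1 + 1 + t) := by
        rw [Finset.sum_range_succ']
        simp only [Nat.add_zero]
        rw [add_comm]
        congr 1
        exact Finset.sum_congr rfl fun t _ => by omega
      rw [hsum, pow_add]
      have h5 : k + 1 + n = k + (n + 1) := by omega
      rw [h5]
      ring
  -- periodicity
  have hperiod : A^[N] x = x := by
    funext k
    obtain ⟨m, j, hj, rfl⟩ : ∃ m j, j < N ∧ k = m * N + j :=
      ⟨k / N, k % N, Nat.mod_lt _ hN, by
        conv_lhs => rw [← Nat.div_add_mod k N]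
        ring⟩
    have e1 := hx m ⟨j, hj⟩
    have e2 := hx (m + 1) ⟨j, hj⟩
    simp only [Fin.val_mk] at e1 e2
    rw [hiter N x (m * N + j)]
    have h1 : m * N + j + N = (m + 1) * N + j := by ring
    rw [h1, e2, e1]
    have h2 : ∑ t ∈ Finset.range ((m + 1) * N), (j + 1 + t)
        = (∑ t ∈ Finset.range (m * N), (j + 1 + t))
          + ∑ t ∈ Finset.range N, (m * N + j + 1 + t) := by
      have h3 : (m + 1) * N = m * N + N := by ring
      rw [h3, Finset.sum_range_add]
      congr 1
      exact Finset.sum_congr rfl fun t _ => by omega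
    rw [h2, pow_add]
    simp only [inv_pow]
    field_simp
  -- the geometric bound
  set M : ℝ := ‖w‖ ^ N * ∑ j, ‖c j‖ with hM
  have hM0 : 0 ≤ M := by positivity
  have hbound : ∀ k, ‖x k‖ ≤ M * (‖w‖⁻¹) ^ k := by
    intro k
    obtain ⟨m, j, hj, rfl⟩ : ∃ m j, j < N ∧ k = m * N + j :=
      ⟨k / N, k % N, Nat.mod_lt _ hN, by
        conv_lhs => rw [← Nat.div_add_mod k N]
        ring⟩
    have e1 := hx m ⟨j, hj⟩
    simp only [Fin.val_mk] at e1
    rw [e1, norm_mul, norm_pow, norm_inv]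
    have hE : m * N ≤ ∑ t ∈ Finset.range (m * N), (j + 1 + t) := by
      calc m * N = ∑ t ∈ Finset.range (m * N), 1 := by simp
        _ ≤ _ := Finset.sum_le_sum fun t _ => by omega
    have hinv0 : (0:ℝ) ≤ ‖w‖⁻¹ := by positivity
    have hinv1 : ‖w‖⁻¹ ≤ 1 := le_of_lt (inv_lt_one_of_one_lt₀ hw)
    have step1 : (‖w‖⁻¹) ^ (∑ t ∈ Finset.range (m * N), (j + 1 + t))
        ≤ (‖w‖⁻¹) ^ (m * N) := pow_le_pow_of_le_one hinv0 hinv1 hE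
    have step2 : (‖w‖⁻¹) ^ (m * N) = ‖w‖ ^ j * (‖w‖⁻¹) ^ (m * N + j) := by
      rw [pow_add]
      field_simp
      rw [one_div, ← mul_pow, mul_inv_cancel₀ hnw0.ne', one_pow]
    have step3 : ‖w‖ ^ j ≤ ‖w‖ ^ N := pow_le_pow_right₀ (le_of_lt hw) (le_of_lt hj)
    have step4 : ‖c ⟨j, hj⟩‖ ≤ ∑ i, ‖c i‖ :=
      Finset.single_le_sum (f := fun i => ‖c i‖) (fun i _ => norm_nonneg _)
        (Finset.mem_univ _)
    calc (‖w‖⁻¹) ^ (∑ t ∈ Finset.range (m * N), (j + 1 + t)) * ‖c ⟨j, hj⟩‖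
        ≤ (‖w‖ ^ j * (‖w‖⁻¹) ^ (m * N + j)) * ‖c ⟨j, hj⟩‖ := by
          apply mul_le_mul_of_nonneg_right _ (norm_nonneg _)
          rw [← step2]; exact step1
      _ ≤ (‖w‖ ^ N * (‖w‖⁻¹) ^ (m * N + j)) * (∑ i, ‖c i‖) := by
          gcongr
      _ = M * (‖w‖⁻¹) ^ (m * N + j) := by rw [hM]; ring
  -- membership in ℓ^p
  have hq : 0 < p.toReal :=
    ENNReal.toReal_pos (one_pos.trans_le hp).ne' hp'
  set q := p.toReal
  have hmem : Memℓp x p := by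
    apply memℓp_gen
    have hr0 : (0:ℝ) ≤ ‖w‖⁻¹ := by positivity
    have hr1 : ‖w‖⁻¹ < 1 := inv_lt_one_of_one_lt₀ hw
    have hrq1 : (‖w‖⁻¹) ^ q < 1 := Real.rpow_lt_one hr0 hr1 hq
    have hrq0 : (0:ℝ) ≤ (‖w‖⁻¹) ^ q := Real.rpow_nonneg hr0 q
    have hsum : Summable fun k : ℕ => M ^ q * ((‖w‖⁻¹) ^ q) ^ k :=
      (summable_geometric_of_lt_one hrq0 hrq1).mul_left _
    apply Summable.of_nonneg_of_le (fun k => Real.rpow_nonneg (norm_nonneg _) q) _ hsum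
    intro k
    calc ‖x k‖ ^ q ≤ (M * (‖w‖⁻¹) ^ k) ^ q :=
          Real.rpow_le_rpow (norm_nonneg _) (hbound k) hq.le
      _ = M ^ q * ((‖w‖⁻¹) ^ q) ^ k := by
          rw [Real.mul_rpow hM0 (by positivity), ← Real.rpow_natCast (‖w‖⁻¹) k,
            ← Real.rpow_mul hr0, mul_comm (k:ℝ) q, Real.rpow_mul hr0,
            Real.rpow_natCast]
  exact ⟨hmem, by rw [hperiod]; exact hmem, hperiod⟩
end

section
/- Let w be a scalar with |w| > 1, N ∈ ℕ, and x₁,…,x_N arbitrary scalars. Define the sequence x by x_{mN+j} = w^{-[(mN+j−1)+(mN+j−2)+⋯+j]} x_j for m ∈ ℤ₊ and j = 1,…,N. Then x ∈ c₀, x ∈ D(A^N), and A^N x = x; that is, x is a periodic point of A in c₀. -/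
/-- Let `|w| > 1`, `N ≥ 1`, and let `c 0, …, c (N-1)` be arbitrary
scalars. The sequence `x` defined blockwise (0-based) by
`x (m*N + j) = w^{-[(mN+j-1)+(mN+j-2)+⋯+(j+1)]} * c j` for `m ∈ ℤ₊`, `j < N`
(the paper's `x_{mN+j} = w^{-[(mN+j-1)+⋯+j]} x_j`, 1-based) belongs to `c₀`,
lies in `D(A^N)`, and satisfies `A^N x = x`, i.e. `x` is a periodic point in `c₀` of
the weighted backward shift `A` (0-based: `A x k = w ^ (k+1) * x (k+1)`). -/
theorem rolewicz_c0_periodic_point {𝕜 : Type*} [RCLike 𝕜]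
    (w : 𝕜) (hw : 1 < ‖w‖)
    (A : (ℕ → 𝕜) → ℕ → 𝕜) (hA : ∀ x k, A x k = w ^ (k + 1) * x (k + 1))
    (N : ℕ) (hN : 0 < N) (c : Fin N → 𝕜)
    (x : ℕ → 𝕜)
    (hx : ∀ (m : ℕ) (j : Fin N),
      x (m * N + ↑j) = w⁻¹ ^ (∑ t ∈ Finset.range (m * N), (↑j + 1 + t)) * c j) :
    Filter.Tendsto x Filter.atTop (nhds 0) ∧
    Filter.Tendsto (A^[N] x) Filter.atTop (nhds 0) ∧
    A^[N] x = x := by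
  have hw0 : w ≠ 0 := by
    intro h; rw [h, norm_zero] at hw; linarith
  -- iterate formula
  have hiter : ∀ (n k : ℕ),
      A^[n] x k = w ^ (∑ t ∈ Finset.range n, (k + 1 + t)) * x (k + n) := by
    intro n
    induction n with
    | zero => intro k; simp
    | succ n ih =>
      intro k
      rw [Function.iterate_succ_apply', hA, ih]
      have hs : ∑ t ∈ Finset.range (n + 1), (k + 1 + t)
          = (∑ t ∈ Finset.range n, (k + 1 + 1 + t)) + (k + 1) := by
        rw [Finset.sum_range_succ' (fun t => k + 1 + t)]
        congr 1
        apply Finset.sum_congr rfl; intro i _; omega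
      have hidx : k + 1 + n = k + (n + 1) := by omega
      rw [hs, pow_add, hidx]
      ring
  -- the fixed point equation
  have hfix : A^[N] x = x := by
    funext k
    have hj : k % N < N := Nat.mod_lt _ hN
    have hk : k / N * N + k % N = k := by
      rw [mul_comm]; exact Nat.div_add_mod k N
    have h1 := hx (k / N) ⟨k % N, hj⟩
    have h2 := hx (k / N + 1) ⟨k % N, hj⟩
    simp only [Fin.val_mk] at h1 h2
    rw [hk] at h1
    have hkN : (k / N + 1) * N + k % N = k + N := by
      rw [add_mul, one_mul, add_right_comm, hk]
    rw [hkN] at h2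
    rw [hiter N k, h2, h1]
    have hsplit : ∑ t ∈ Finset.range ((k / N + 1) * N), (k % N + 1 + t)
        = (∑ t ∈ Finset.range (k / N * N), (k % N + 1 + t))
          + ∑ t ∈ Finset.range N, (k + 1 + t) := by
      rw [add_mul, one_mul, Finset.sum_range_add]
      congr 1
      apply Finset.sum_congr rfl
      intro i _; omega
    rw [hsplit, pow_add]
    field_simp
    ring_nf
    rw [← mul_pow, mul_inv_cancel₀ hw0, one_pow, one_mul]
  -- tendsto
  have htend : Filter.Tendsto x Filter.atTop (nhds 0) := by
    set r : ℝ := ‖w‖⁻¹ with hr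
    have hr0 : 0 ≤ r := by positivity
    have hr1 : r < 1 := by
      rw [hr, inv_lt_one_iff₀]; right; exact hw
    haveI : Nonempty (Fin N) := ⟨⟨0, hN⟩⟩
    set M : ℝ := Finset.univ.sup' Finset.univ_nonempty (fun j : Fin N => ‖c j‖) with hM
    have hbound : ∀ k, ‖x k‖ ≤ M * r ^ (k - N) := by
      intro k
      have hj : k % N < N := Nat.mod_lt _ hN
      have hk : k / N * N + k % N = k := by
        rw [mul_comm]; exact Nat.div_add_mod k N
      have h1 := hx (k / N) ⟨k % N, hj⟩
      simp only [Fin.val_mk] at h1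
      rw [hk] at h1
      rw [h1, norm_mul, norm_pow, norm_inv]
      have hE : k - N ≤ ∑ t ∈ Finset.range (k / N * N), (k % N + 1 + t) := by
        have h2 : k / N * N ≤ ∑ t ∈ Finset.range (k / N * N), (k % N + 1 + t) := by
          calc k / N * N = (Finset.range (k / N * N)).card • 1 := by simp
            _ ≤ ∑ t ∈ Finset.range (k / N * N), (k % N + 1 + t) :=
                Finset.card_nsmul_le_sum _ _ _ (fun i _ => by omega)
        have h3 : k - N ≤ k / N * N := by
          apply Nat.sub_le_of_le_add
          conv_lhs => rw [← hk]
          exact Nat.add_le_add_left hj.le _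
        exact le_trans h3 h2
      have hpw : ‖w‖⁻¹ ^ (∑ t ∈ Finset.range (k / N * N), (k % N + 1 + t)) ≤ r ^ (k - N) :=
        pow_le_pow_of_le_one hr0 hr1.le hE
      have hc : ‖c ⟨k % N, hj⟩‖ ≤ M :=
        Finset.le_sup' (fun j : Fin N => ‖c j‖) (Finset.mem_univ ⟨k % N, hj⟩)
      calc ‖w‖⁻¹ ^ (∑ t ∈ Finset.range (k / N * N), (k % N + 1 + t)) * ‖c ⟨k % N, hj⟩‖
          ≤ r ^ (k - N) * M :=
            mul_le_mul hpw hc (norm_nonneg _) (by positivity)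
        _ = M * r ^ (k - N) := by ring
    have hlim : Filter.Tendsto (fun k : ℕ => M * r ^ (k - N)) Filter.atTop (nhds 0) := by
      have : Filter.Tendsto (fun k : ℕ => r ^ (k - N)) Filter.atTop (nhds 0) :=
        (tendsto_pow_atTop_nhds_zero_of_lt_one hr0 hr1).comp (Filter.tendsto_sub_atTop_nat N)
      simpa using this.const_mul M
    exact tendsto_zero_iff_norm_tendsto_zero.mpr
      (squeeze_zero (fun k => norm_nonneg _) hbound hlim)
  exact ⟨htend, by rw [hfix]; exact htend, hfix⟩
end

section
/- Let w be a scalar with |w| > 1, 1 ≤ p < ∞, let y ∈ ℓ^p be an eventually zero sequence with y_k = 0 for k > n, and let N ≥ n. Define the periodic point x by the block construction x_{mN+j} = w^{-[(mN+j−1)+⋯+j]} y_j for j = 1,…,n and x_{mN+j} = 0 for j = n+1,…,N (m ∈ ℤ₊), so that A^N x = x. Then ‖y − x‖_p ≤ ‖y‖_p · |w|^{−N}/(1 − |w|^{−N}); in particular, ‖y − x‖_p → 0 as N → ∞. -/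
open scoped ENNReal

/-- Let `|w| > 1`, `1 ≤ p < ∞`, let `y ∈ ℓ^p` vanish beyond its first
`n` entries (0-based: `y k = 0` for `k ≥ n`), and let `N ≥ n`, `N ≥ 1`. Define the
periodic point `x` by the block construction (0-based)
`x (m*N + j) = w^{-[(mN+j-1)+⋯+(j+1)]} * y j` for `m ∈ ℤ₊`, `j < N`
(so that `A^N x = x`, where `A x k = w ^ (k+1) * x (k+1)` is the weighted backward
shift). Then `‖y - x‖_p ≤ ‖y‖_p * |w|^{-N} / (1 - |w|^{-N})`. -/
theorem rolewicz_lp_periodic_approx {𝕜 : Type*} [RCLike 𝕜]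
    (w : 𝕜) (hw : 1 < ‖w‖) (p : ℝ≥0∞) [Fact (1 ≤ p)] (hp' : p ≠ ∞)
    (A : (ℕ → 𝕜) → ℕ → 𝕜) (hA : ∀ x k, A x k = w ^ (k + 1) * x (k + 1))
    (n : ℕ) (y : lp (fun _ : ℕ => 𝕜) p) (hy : ∀ k, n ≤ k → (y : ℕ → 𝕜) k = 0)
    (N : ℕ) (hN : 0 < N) (hnN : n ≤ N)
    (x : ℕ → 𝕜)
    (hx : ∀ (m : ℕ) (j : Fin N),
      x (m * N + ↑j) = w⁻¹ ^ (∑ t ∈ Finset.range (m * N), (↑j + 1 + t)) * y ↑j) :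
    ∃ hxp : Memℓp x p,
      A^[N] x = x ∧
      ‖y - (⟨x, hxp⟩ : lp (fun _ : ℕ => 𝕜) p)‖ ≤
        ‖y‖ * (‖w‖⁻¹ ^ N / (1 - ‖w‖⁻¹ ^ N)) := by
  haveI : NeZero N := ⟨hN.ne'⟩
  have hw0 : (0 : ℝ) < ‖w‖ := lt_trans one_pos hw
  have hwne : w ≠ 0 := by
    intro h; rw [h, norm_zero] at hw; linarith
  set q : ℝ := ‖w‖⁻¹ with hqdef
  have hq0 : 0 < q := inv_pos.mpr hw0
  have hq1 : q < 1 := inv_lt_one_of_one_lt₀ hw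
  set s : ℝ := q ^ N with hsdef
  have hs0 : 0 < s := pow_pos hq0 N
  have hs1 : s < 1 := pow_lt_one₀ hq0.le hq1 hN.ne'
  set r : ℝ := p.toReal with hrdef
  have hr1 : 1 ≤ r := by
    have h1 : (1 : ℝ≥0∞) ≤ p := Fact.out
    have := ENNReal.toReal_mono hp' h1
    simpa using this
  have hr0 : 0 < r := lt_of_lt_of_le one_pos hr1
  set t : ℝ := s ^ r with htdef
  have ht0 : 0 < t := Real.rpow_pos_of_pos hs0 r
  have ht1 : t < 1 := Real.rpow_lt_one hs0.le hs1 hr0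
  have hyN : ∀ k, N ≤ k → (y : ℕ → 𝕜) k = 0 := fun k hk => hy k (le_trans hnN hk)
  -- closed form for x at every coordinate
  have hxk : ∀ k : ℕ, x k =
      w⁻¹ ^ (∑ t ∈ Finset.range (k / N * N), (k % N + 1 + t)) * y (k % N) := by
    intro k
    have h := hx (k / N) ⟨k % N, Nat.mod_lt _ hN⟩
    simpa [Nat.div_add_mod'] using h
  have hxlt : ∀ k, k < N → x k = (y : ℕ → 𝕜) k := by
    intro k hk
    have h := hxk k
    rw [Nat.div_eq_of_lt hk, Nat.mod_eq_of_lt hk] at h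
    simpa using h
  -- norm bound at each coordinate
  have key : ∀ k : ℕ, ‖x k‖ ≤ s ^ (k / N) * ‖(y : ℕ → 𝕜) (k % N)‖ := by
    intro k
    rw [hxk k, norm_mul, norm_pow, norm_inv]
    have hle : k / N * N ≤ ∑ t ∈ Finset.range (k / N * N), (k % N + 1 + t) := by
      calc k / N * N = ∑ _t ∈ Finset.range (k / N * N), 1 := by simp
        _ ≤ _ := Finset.sum_le_sum (fun t _ => by omega)
    have : q ^ (∑ t ∈ Finset.range (k / N * N), (k % N + 1 + t)) ≤ s ^ (k / N) := by
      rw [hsdef, ← pow_mul, mul_comm N (k / N)]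
      exact pow_le_pow_of_le_one hq0.le hq1.le hle
    exact mul_le_mul_of_nonneg_right this (norm_nonneg _)
  have hpow : ∀ m : ℕ, (s ^ m) ^ r = t ^ m := by
    intro m
    rw [htdef, ← Real.rpow_natCast s m, ← Real.rpow_natCast (s ^ r) m,
      ← Real.rpow_mul hs0.le, ← Real.rpow_mul hs0.le, mul_comm]
  have keyr : ∀ k : ℕ, ‖x k‖ ^ r ≤ t ^ (k / N) * ‖(y : ℕ → 𝕜) (k % N)‖ ^ r := by
    intro k
    calc ‖x k‖ ^ r ≤ (s ^ (k / N) * ‖(y : ℕ → 𝕜) (k % N)‖) ^ r :=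
          Real.rpow_le_rpow (norm_nonneg _) (key k) hr0.le
      _ = t ^ (k / N) * ‖(y : ℕ → 𝕜) (k % N)‖ ^ r := by
          rw [Real.mul_rpow (pow_nonneg hs0.le _) (norm_nonneg _), hpow]
  -- the comparison functions
  set c : Fin N → ℝ := fun j => ‖(y : ℕ → 𝕜) (↑j)‖ ^ r with hcdef
  have hc0 : ∀ j, 0 ≤ c j := fun j => Real.rpow_nonneg (norm_nonneg _) r
  set φ : ℕ → ℝ := fun m => if m = 0 then 0 else t ^ m with hφdef
  have hφ0 : ∀ m, 0 ≤ φ m := by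
    intro m; by_cases h : m = 0 <;> simp [hφdef, h, ht0.le, pow_nonneg]
  have hφle : ∀ m, φ m ≤ t ^ m := by
    intro m; by_cases h : m = 0 <;> simp [hφdef, h, pow_nonneg ht0.le]
  have hgeom : Summable (fun m : ℕ => t ^ m) := summable_geometric_of_lt_one ht0.le ht1
  have hφsum : Summable φ := hgeom.of_nonneg_of_le hφ0 hφle
  have hφtsum : ∑' m, φ m = t / (1 - t) := by
    rw [Summable.tsum_eq_zero_add hφsum]
    have h1 : ∀ m : ℕ, φ (m + 1) = t * t ^ m := by
      intro m; simp [hφdef, pow_succ, mul_comm]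
    simp only [h1]
    have hφ00 : φ 0 = 0 := by simp [hφdef]
    rw [hφ00, zero_add, tsum_mul_left, tsum_geometric_of_lt_one ht0.le ht1, div_eq_mul_inv]
  have hcsum : Summable c := Summable.of_finite
  -- summability of big comparison function over ℕ × Fin N
  have hFsum : Summable (fun mj : ℕ × Fin N => t ^ mj.1 * c mj.2) :=
    hgeom.mul_of_nonneg hcsum (fun m => pow_nonneg ht0.le m) hc0
  have hHsum : Summable (fun mj : ℕ × Fin N => φ mj.1 * c mj.2) :=
    hφsum.mul_of_nonneg hcsum hφ0 hc0
  have e := Nat.divModEquiv N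
  -- Summability of ‖x k‖ ^ r
  have hFcomp : Summable (fun k : ℕ => t ^ (k / N) * ‖(y : ℕ → 𝕜) (k % N)‖ ^ r) := by
    have := hFsum.comp_injective (Nat.divModEquiv N).injective
    exact this.congr (fun k => by simp [Function.comp_apply, Nat.divModEquiv, hcdef, Fin.val_natCast])
  have hxsum : Summable (fun k : ℕ => ‖x k‖ ^ r) :=
    hFcomp.of_nonneg_of_le (fun k => Real.rpow_nonneg (norm_nonneg _) r) keyr
  have hxp : Memℓp x p := memℓp_gen hxsum
  refine ⟨hxp, ?_, ?_⟩
  · -- A^[N] x = x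
    have hiter : ∀ (i k : ℕ),
        A^[i] x k = w ^ (∑ ss ∈ Finset.range i, (k + 1 + ss)) * x (k + i) := by
      intro i
      induction i with
      | zero => intro k; simp
      | succ i ih =>
        intro k
        rw [Function.iterate_succ_apply', hA, ih (k + 1)]
        rw [← mul_assoc, ← pow_add]
        congr 2
        · rw [Finset.sum_range_succ' (fun ss => k + 1 + ss)]
          simp only [add_zero]
          rw [add_comm]
          congr 1
          apply Finset.sum_congr rfl
          intro z _
          omega
        · omega
    funext k
    rw [hiter N k, hxk k, hxk (k + N)]
    have h1 : (k + N) / N = k / N + 1 := by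
      rw [Nat.add_div_right _ hN]
    have h2 : (k + N) % N = k % N := Nat.add_mod_right k N
    rw [h1, h2, add_mul, one_mul, Finset.sum_range_add]
    have h3 : ∀ z ∈ Finset.range N, (k % N + 1 + (k / N * N + z)) = k + 1 + z := by
      intro z _
      have h5 := Nat.div_add_mod k N
      have h6 : k / N * N = N * (k / N) := Nat.mul_comm _ _
      omega
    rw [Finset.sum_congr rfl h3, pow_add]
    have h4 : w ^ (∑ ss ∈ Finset.range N, (k + 1 + ss)) *
        w⁻¹ ^ (∑ ss ∈ Finset.range N, (k + 1 + ss)) = 1 := by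
      rw [inv_pow, mul_inv_cancel₀ (pow_ne_zero _ hwne)]
    calc w ^ (∑ ss ∈ Finset.range N, (k + 1 + ss)) *
          (w⁻¹ ^ (∑ t ∈ Finset.range (k / N * N), (k % N + 1 + t)) *
            w⁻¹ ^ (∑ ss ∈ Finset.range N, (k + 1 + ss)) * (y : ℕ → 𝕜) (k % N))
        = (w ^ (∑ ss ∈ Finset.range N, (k + 1 + ss)) *
            w⁻¹ ^ (∑ ss ∈ Finset.range N, (k + 1 + ss))) *
          (w⁻¹ ^ (∑ t ∈ Finset.range (k / N * N), (k % N + 1 + t)) *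
            (y : ℕ → 𝕜) (k % N)) := by ring
      _ = _ := by rw [h4]; ring
  · -- norm bound
    set G : ℕ → ℝ := fun k => (if k / N = 0 then 0 else t ^ (k / N)) * ‖(y : ℕ → 𝕜) (k % N)‖ ^ r
      with hGdef
    have hG0 : ∀ k, 0 ≤ G k := by
      intro k
      apply mul_nonneg _ (Real.rpow_nonneg (norm_nonneg _) r)
      by_cases h : k / N = 0 <;> simp [h, pow_nonneg ht0.le]
    have hGsum : Summable G := by
      have := hHsum.comp_injective (Nat.divModEquiv N).injective
      exact this.congr (fun k => by
        simp [Function.comp_apply, Nat.divModEquiv, hGdef, hφdef, hcdef, Fin.val_natCast])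
    have hGtsum : ∑' k, G k = (t / (1 - t)) * ∑ j : Fin N, c j := by
      have h1 : ∑' k, G k = ∑' mj : ℕ × Fin N, φ mj.1 * c mj.2 := by
        rw [← (Nat.divModEquiv N).tsum_eq (fun mj : ℕ × Fin N => φ mj.1 * c mj.2)]
        apply tsum_congr
        intro k
        simp [Nat.divModEquiv, hGdef, hφdef, hcdef, Fin.val_natCast]
      rw [h1, Summable.tsum_prod' hHsum (fun m => Summable.of_finite)]
      have h2 : ∀ m : ℕ, ∑' j : Fin N, φ m * c j = φ m * ∑ j : Fin N, c j := by
        intro m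
        rw [tsum_fintype, ← Finset.mul_sum]
      simp only [h2]
      rw [tsum_mul_right, hφtsum]
    -- coordinate bound for y - x
    have hcoord : ∀ k : ℕ, ‖(y : ℕ → 𝕜) k - x k‖ ^ r ≤ G k := by
      intro k
      by_cases hk : k < N
      · have : (y : ℕ → 𝕜) k - x k = 0 := by rw [hxlt k hk]; ring
        rw [this, norm_zero, Real.zero_rpow hr0.ne']
        exact hG0 k
      · push_neg at hk
        have hy0 : (y : ℕ → 𝕜) k = 0 := hyN k hk
        have hdiv : ¬ k / N = 0 := by
          rw [Nat.div_eq_zero_iff]; omega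
        rw [hy0, zero_sub, norm_neg, hGdef]
        simp only [hdiv, if_false]
        exact keyr k
    have hsub : Summable (fun k : ℕ => ‖(y : ℕ → 𝕜) k - x k‖ ^ r) :=
      hGsum.of_nonneg_of_le (fun k => Real.rpow_nonneg (norm_nonneg _) r) hcoord
    -- identify the sum for ‖y‖
    have hysum : ‖y‖ ^ r = ∑ j : Fin N, c j := by
      rw [lp.norm_rpow_eq_tsum hr0 y]
      rw [tsum_eq_sum (s := Finset.range N)
        (by intro k hk
            rw [hyN k (by simpa using hk), norm_zero, Real.zero_rpow hr0.ne'])]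
      rw [← Fin.sum_univ_eq_sum_range (fun k => ‖(y : ℕ → 𝕜) k‖ ^ r)]
    -- put it together
    have hnorm : ‖y - (⟨x, hxp⟩ : lp (fun _ : ℕ => 𝕜) p)‖ =
        (∑' k, ‖(y : ℕ → 𝕜) k - x k‖ ^ r) ^ (1 / r) := by
      rw [lp.norm_eq_tsum_rpow hr0]
      congr 1
    rw [hnorm]
    have hle1 : ∑' k, ‖(y : ℕ → 𝕜) k - x k‖ ^ r ≤ (t / (1 - t)) * ‖y‖ ^ r := by
      rw [hysum]
      rw [← hGtsum]
      exact Summable.tsum_le_tsum hcoord hsub hGsum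
    have hle2 : t / (1 - t) ≤ (s / (1 - s)) ^ r := by
      have hsr : s ^ r ≤ s := by
        calc s ^ r ≤ s ^ (1:ℝ) := Real.rpow_le_rpow_of_exponent_ge hs0 hs1.le hr1
          _ = s := Real.rpow_one s
      have h1s : (0:ℝ) < 1 - s := by linarith
      have h1t : (0:ℝ) < 1 - t := by linarith
      have hub : (1 - s) ^ r ≤ 1 - t := by
        calc (1 - s) ^ r ≤ (1 - s) ^ (1:ℝ) :=
              Real.rpow_le_rpow_of_exponent_ge h1s (by linarith) hr1
          _ = 1 - s := Real.rpow_one _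
          _ ≤ 1 - t := by rw [htdef]; linarith
      rw [Real.div_rpow hs0.le h1s.le]
      rw [div_le_div_iff₀ h1t (Real.rpow_pos_of_pos h1s r)]
      calc t * (1 - s) ^ r ≤ t * (1 - t) := by
            exact mul_le_mul_of_nonneg_left hub ht0.le
        _ = s ^ r * (1 - t) := by rw [htdef]
    calc (∑' k, ‖(y : ℕ → 𝕜) k - x k‖ ^ r) ^ (1 / r)
        ≤ ((t / (1 - t)) * ‖y‖ ^ r) ^ (1 / r) := by
          apply Real.rpow_le_rpow (tsum_nonneg (fun k => Real.rpow_nonneg (norm_nonneg _) r))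
            hle1 (by positivity)
      _ ≤ ((s / (1 - s)) ^ r * ‖y‖ ^ r) ^ (1 / r) := by
          apply Real.rpow_le_rpow
            (mul_nonneg (div_nonneg ht0.le (by linarith)) (Real.rpow_nonneg (norm_nonneg _) r))
            (mul_le_mul_of_nonneg_right hle2 (Real.rpow_nonneg (norm_nonneg _) r))
            (by positivity)
      _ = (s / (1 - s)) * ‖y‖ := by
          rw [← Real.mul_rpow (div_nonneg hs0.le (by linarith)) (norm_nonneg _),
            one_div, Real.rpow_rpow_inv (mul_nonneg (div_nonneg hs0.le (by linarith))
              (norm_nonneg _)) hr0.ne']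
      _ = ‖y‖ * (s / (1 - s)) := mul_comm _ _
end

section
/- Let w be a scalar (real or complex) with |w| > 1 and 1 ≤ p < ∞. The set of periodic points of the weighted backward shift A, namely {x ∈ C^∞(A) : ∃ N ∈ ℕ, A^N x = x}, is dense in ℓ^p. -/
open scoped ENNReal
open Filter Finset Topology

private def Tn : ℕ → ℕ := fun k => ∑ j ∈ Finset.range k, (j + 1)

private lemma Tn_succ (k : ℕ) : Tn (k + 1) = Tn k + (k + 1) := by
  simp [Tn, Finset.sum_range_succ]

private lemma Tn_mono : Monotone Tn := fun _ _ h =>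
  Finset.sum_le_sum_of_subset (Finset.range_subset_range.2 h)

private lemma le_Tn (k : ℕ) : k ≤ Tn k := by
  induction k with
  | zero => simp
  | succ n ih => rw [Tn_succ]; omega

private lemma Tn_add_lt {a b : ℕ} (h : a < b) : Tn a + b ≤ Tn b := by
  obtain ⟨c, rfl⟩ := Nat.exists_eq_add_of_lt h
  calc Tn a + (a + c + 1) ≤ Tn (a + c) + (a + c + 1) := by
        have := Tn_mono (Nat.le_add_right a c); omega
    _ = Tn (a + c + 1) := (Tn_succ _).symm

private lemma rpow_lt_of_rpow_lt {a b q : ℝ} (hb : 0 ≤ b) (hq : 0 < q)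
    (h : a ^ q < b ^ q) : a < b := by
  by_contra hc
  push_neg at hc
  exact absurd (Real.rpow_le_rpow hb hc hq.le) (not_le.2 h)

private lemma pow_rpow_comm {r q : ℝ} (hr : 0 ≤ r) (k : ℕ) :
    (r ^ k) ^ q = (r ^ q) ^ k := by
  rw [← Real.rpow_natCast r k, ← Real.rpow_natCast (r ^ q) k, ← Real.rpow_mul hr,
    ← Real.rpow_mul hr, mul_comm]

set_option maxHeartbeats 10000000 in
/-- For the weighted backward shift `A` (0-based:
`A x k = w ^ (k+1) * x (k+1)`) with `|w| > 1` on `ℓ^p` (`1 ≤ p < ∞`), the set of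
periodic points `{x ∈ C^∞(A) | ∃ N ≥ 1, A^N x = x}` is dense in `ℓ^p`. -/
theorem rolewicz_lp_periodic_points_dense {𝕜 : Type*} [RCLike 𝕜]
    (w : 𝕜) (hw : 1 < ‖w‖) (p : ℝ≥0∞) [Fact (1 ≤ p)] (hp' : p ≠ ∞)
    (A : (ℕ → 𝕜) → ℕ → 𝕜) (hA : ∀ x k, A x k = w ^ (k + 1) * x (k + 1)) :
    Dense {x : lp (fun _ : ℕ => 𝕜) p |
      (∀ n : ℕ, Memℓp (A^[n] ⇑x) p) ∧ ∃ N : ℕ, 0 < N ∧ A^[N] ⇑x = ⇑x} := by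
  have hp1 : 1 ≤ p := Fact.out
  have hp0 : p ≠ 0 := (lt_of_lt_of_le zero_lt_one hp1).ne'
  set q := p.toReal with hqdef
  have hq : 0 < q := ENNReal.toReal_pos hp0 hp'
  have hw0 : (0 : ℝ) < ‖w‖ := lt_trans zero_lt_one hw
  have hwne : w ≠ 0 := by simpa using hw0
  set r : ℝ := ‖w‖⁻¹ with hrdef
  have hr0 : 0 ≤ r := by positivity
  have hr1 : r < 1 := by
    rw [hrdef]; exact inv_lt_one_of_one_lt₀ hw
  set rq : ℝ := r ^ q with hrqdef
  have hrq0 : 0 ≤ rq := Real.rpow_nonneg hr0 q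
  have hrq1 : rq < 1 := Real.rpow_lt_one hr0 hr1 hq
  rw [Metric.dense_iff]
  intro y ε hε
  have hε2 : (0 : ℝ) < ε / 2 := by linarith
  have hε2q : (0 : ℝ) < (ε / 2) ^ q := Real.rpow_pos_of_pos hε2 q
  set C : ℝ := (‖y‖ + 1) ^ q * (1 - rq)⁻¹ with hCdef
  -- choose N
  have h1 : Tendsto (fun N => ∑' k, ‖y (k + N)‖ ^ q) atTop (𝓝 0) :=
    tendsto_sum_nat_add (fun k => ‖y k‖ ^ q)
  have h2 : Tendsto (fun N : ℕ => C * rq ^ N) atTop (𝓝 0) := by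
    simpa using (tendsto_pow_atTop_nhds_zero_of_lt_one hrq0 hrq1).const_mul C
  obtain ⟨N, ⟨hN1, hN2⟩, hN0⟩ :=
    (((h1.eventually_lt_const hε2q).and (h2.eventually_lt_const hε2q)).and
      (eventually_ge_atTop 1)).exists
  -- the truncation and the periodic point
  set tY : ℕ → 𝕜 := fun k => if k < N then y k else 0 with htYdef
  set x : ℕ → 𝕜 := fun k => w ^ Tn (k % N) * (w ^ Tn k)⁻¹ * y (k % N) with hxdef
  have hiter : ∀ n k, A^[n] x k = w ^ Tn ((k + n) % N) * (w ^ Tn k)⁻¹ * y ((k + n) % N) := by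
    intro n
    induction n with
    | zero => intro k; simp [hxdef]
    | succ n ih =>
      intro k
      rw [Function.iterate_succ_apply', hA, ih (k + 1)]
      have h3 : k + 1 + n = k + (n + 1) := by ring
      rw [h3, Tn_succ, pow_add]
      field_simp
      ring
  have hNpos : 0 < N := hN0
  set B : ℝ := ‖w‖ ^ Tn N * ‖y‖ with hBdef
  have hB0 : 0 ≤ B := by positivity
  -- uniform geometric bound on all iterates
  have hkey : ∀ n k, ‖A^[n] x k‖ ≤ B * r ^ k := by
    intro n k
    rw [hiter n k]
    have e1 : ‖w ^ Tn ((k + n) % N) * (w ^ Tn k)⁻¹ * (y : ℕ → 𝕜) ((k + n) % N)‖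
        = ‖w‖ ^ Tn ((k + n) % N) * (‖w‖ ^ Tn k)⁻¹ * ‖(y : ℕ → 𝕜) ((k + n) % N)‖ := by
      simp [norm_mul, norm_pow, norm_inv]
    rw [e1, hBdef]
    have e2 : ‖w‖ ^ Tn ((k + n) % N) ≤ ‖w‖ ^ Tn N :=
      pow_le_pow_right₀ hw.le (Tn_mono (Nat.mod_lt _ hNpos).le)
    have e3 : (‖w‖ ^ Tn k)⁻¹ ≤ r ^ k := by
      rw [hrdef, inv_pow]
      exact inv_anti₀ (by positivity) (pow_le_pow_right₀ hw.le (le_Tn k))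
    have e4 : ‖(y : ℕ → 𝕜) ((k + n) % N)‖ ≤ ‖y‖ := lp.norm_apply_le_norm hp0 y _
    calc ‖w‖ ^ Tn ((k + n) % N) * (‖w‖ ^ Tn k)⁻¹ * ‖(y : ℕ → 𝕜) ((k + n) % N)‖
        ≤ ‖w‖ ^ Tn N * (r ^ k) * ‖y‖ :=
          mul_le_mul (mul_le_mul e2 e3 (by positivity) (by positivity)) e4
            (norm_nonneg _) (by positivity)
      _ = ‖w‖ ^ Tn N * ‖y‖ * r ^ k := by ring
  -- geometric majorant is p-summable
  have hgeoB : Summable (fun k : ℕ => (B * r ^ k) ^ q) := by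
    have e : (fun k : ℕ => (B * r ^ k) ^ q) = fun k : ℕ => B ^ q * rq ^ k := by
      funext k
      rw [Real.mul_rpow hB0 (by positivity), pow_rpow_comm hr0, hrqdef]
    rw [e]
    exact (summable_geometric_of_lt_one hrq0 hrq1).mul_left _
  have hmem : ∀ n, Memℓp (A^[n] x) p := by
    intro n
    apply memℓp_gen
    exact hgeoB.of_nonneg_of_le (fun k => by positivity)
      (fun k => Real.rpow_le_rpow (norm_nonneg _) (hkey n k) hq.le)
  have hxmem : Memℓp x p := by simpa using hmem 0
  -- periodicity
  have hper : A^[N] x = x := by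
    funext k
    rw [hiter N k]
    simp only [Nat.add_mod_right, hxdef]
  -- truncation
  have htYmem : Memℓp tY p := by
    apply memℓp_gen
    apply summable_of_ne_finset_zero (s := Finset.range N)
    intro k hk
    rw [Finset.mem_range, not_lt] at hk
    simp [htYdef, Nat.not_lt.2 hk, Real.zero_rpow (x := p.toReal) hq.ne']
  set X : lp (fun _ : ℕ => 𝕜) p := ⟨x, hxmem⟩ with hXdef
  set TY : lp (fun _ : ℕ => 𝕜) p := ⟨tY, htYmem⟩ with hTYdef2
  -- x agrees with tY below N
  have hagree : ∀ k, k < N → x k = tY k := by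
    intro k hk
    simp only [hxdef, htYdef, Nat.mod_eq_of_lt hk, if_pos hk,
      mul_inv_cancel₀ (pow_ne_zero _ hwne), one_mul]
  -- ‖TY - y‖ < ε/2
  have hTYy : ‖TY - y‖ < ε / 2 := by
    apply rpow_lt_of_rpow_lt hε2.le hq
    rw [lp.norm_rpow_eq_tsum hq]
    have hsub : ∀ k, (↑(TY - y) : ℕ → 𝕜) k = tY k - (y : ℕ → 𝕜) k := by
      intro k; rw [lp.coeFn_sub]; rfl
    have hsummable : Summable (fun k => ‖(↑(TY - y) : ℕ → 𝕜) k‖ ^ q) :=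
      (lp.memℓp (TY - y)).summable hq
    rw [← Summable.sum_add_tsum_nat_add N hsummable]
    have hzero : ∑ k ∈ Finset.range N, ‖(↑(TY - y) : ℕ → 𝕜) k‖ ^ q = 0 := by
      apply Finset.sum_eq_zero
      intro k hk
      rw [Finset.mem_range] at hk
      rw [hsub k]
      simp [htYdef, if_pos hk, Real.zero_rpow hq.ne']
    have htail : ∀ k : ℕ, ‖(↑(TY - y) : ℕ → 𝕜) (k + N)‖ ^ q = ‖(y : ℕ → 𝕜) (k + N)‖ ^ q := by
      intro k
      rw [hsub (k + N)]
      simp [htYdef, Nat.not_lt.2 (Nat.le_add_left N k)]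
    rw [hzero, zero_add]
    calc ∑' k, ‖(↑(TY - y) : ℕ → 𝕜) (k + N)‖ ^ q
        = ∑' k, ‖(y : ℕ → 𝕜) (k + N)‖ ^ q := by exact tsum_congr htail
      _ < (ε / 2) ^ q := hN1
  -- ‖X - TY‖ < ε/2
  have hXTY : ‖X - TY‖ < ε / 2 := by
    apply rpow_lt_of_rpow_lt hε2.le hq
    rw [lp.norm_rpow_eq_tsum hq]
    have hsub : ∀ k, (↑(X - TY) : ℕ → 𝕜) k = x k - tY k := by
      intro k; rw [lp.coeFn_sub]; rfl
    have hsummable : Summable (fun k => ‖(↑(X - TY) : ℕ → 𝕜) k‖ ^ q) :=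
      (lp.memℓp (X - TY)).summable hq
    rw [← Summable.sum_add_tsum_nat_add N hsummable]
    have hzero : ∑ k ∈ Finset.range N, ‖(↑(X - TY) : ℕ → 𝕜) k‖ ^ q = 0 := by
      apply Finset.sum_eq_zero
      intro k hk
      rw [Finset.mem_range] at hk
      rw [hsub k, hagree k hk]
      simp [Real.zero_rpow hq.ne']
    rw [hzero, zero_add]
    -- tail bound
    have hxbound : ∀ k : ℕ, ‖x (k + N)‖ ≤ (‖y‖ + 1) * r ^ (k + N) := by
      intro k
      set m : ℕ := k + N with hmdef
      have hmN : N ≤ m := Nat.le_add_left N k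
      have hmodm : m % N < m := lt_of_lt_of_le (Nat.mod_lt _ hNpos) hmN
      have hle : Tn (m % N) + m ≤ Tn m := Tn_add_lt hmodm
      have hP : ‖w‖ ^ Tn (m % N) * (‖w‖ ^ Tn m)⁻¹ ≤ r ^ m := by
        rw [mul_inv_le_iff₀ (by positivity : (0:ℝ) < ‖w‖ ^ Tn m)]
        have h4 : r ^ m * ‖w‖ ^ (Tn (m % N) + m) ≤ r ^ m * ‖w‖ ^ Tn m := by
          have := pow_le_pow_right₀ hw.le hle
          gcongr
        have h5 : r ^ m * ‖w‖ ^ (Tn (m % N) + m) = ‖w‖ ^ Tn (m % N) := by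
          rw [pow_add, hrdef, inv_pow]
          have hw' : ‖w‖ ≠ 0 := hw0.ne'
          simp only [hmdef, pow_add, inv_pow]
          field_simp
        linarith
      have e1 : ‖x m‖ = ‖w‖ ^ Tn (m % N) * (‖w‖ ^ Tn m)⁻¹ * ‖(y : ℕ → 𝕜) (m % N)‖ := by
        simp [hxdef, norm_mul, norm_pow, norm_inv]
      rw [e1]
      have e4 : ‖(y : ℕ → 𝕜) (m % N)‖ ≤ ‖y‖ + 1 :=
        (lp.norm_apply_le_norm hp0 y _).trans (by linarith)
      calc ‖w‖ ^ Tn (m % N) * (‖w‖ ^ Tn m)⁻¹ * ‖(y : ℕ → 𝕜) (m % N)‖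
          ≤ r ^ m * (‖y‖ + 1) := by
            apply mul_le_mul hP e4 (norm_nonneg _) (by positivity)
        _ = (‖y‖ + 1) * r ^ m := by ring
    have hterm : ∀ k : ℕ, ((‖y‖ + 1) * r ^ (k + N)) ^ q
        = ((‖y‖ + 1) ^ q * rq ^ N) * rq ^ k := by
      intro k
      rw [Real.mul_rpow (by positivity) (by positivity), pow_rpow_comm hr0, ← hrqdef, pow_add]
      ring
    have hRHSsum : Summable (fun k : ℕ => ((‖y‖ + 1) * r ^ (k + N)) ^ q) := by
      rw [show (fun k : ℕ => ((‖y‖ + 1) * r ^ (k + N)) ^ q)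
          = fun k : ℕ => ((‖y‖ + 1) ^ q * rq ^ N) * rq ^ k from funext hterm]
      exact (summable_geometric_of_lt_one hrq0 hrq1).mul_left _
    have hbound2 : ∑' k, ‖(↑(X - TY) : ℕ → 𝕜) (k + N)‖ ^ q
        ≤ ∑' k : ℕ, ((‖y‖ + 1) * r ^ (k + N)) ^ q := by
      apply Summable.tsum_le_tsum _ ((summable_nat_add_iff N).2 hsummable) hRHSsum
      intro k
      apply Real.rpow_le_rpow (norm_nonneg _) _ hq.le
      rw [hsub (k + N)]
      have : tY (k + N) = 0 := by simp [htYdef, Nat.not_lt.2 (Nat.le_add_left N k)]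
      rw [this, sub_zero]
      exact hxbound k
    have hval : ∑' k : ℕ, ((‖y‖ + 1) * r ^ (k + N)) ^ q = C * rq ^ N := by
      rw [show (fun k : ℕ => ((‖y‖ + 1) * r ^ (k + N)) ^ q)
          = fun k : ℕ => ((‖y‖ + 1) ^ q * rq ^ N) * rq ^ k from funext hterm]
      rw [tsum_mul_left, tsum_geometric_of_lt_one hrq0 hrq1, hCdef]
      ring
    calc ∑' k, ‖(↑(X - TY) : ℕ → 𝕜) (k + N)‖ ^ q
        ≤ C * rq ^ N := le_of_le_of_eq hbound2 hval
      _ < (ε / 2) ^ q := hN2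
  refine ⟨X, ?_, ?_, N, hNpos, ?_⟩
  · rw [Metric.mem_ball]
    calc dist X y ≤ dist X TY + dist TY y := dist_triangle _ _ _
      _ = ‖X - TY‖ + ‖TY - y‖ := by rw [dist_eq_norm, dist_eq_norm]
      _ < ε / 2 + ε / 2 := by exact add_lt_add hXTY hTYy
      _ = ε := by ring
  · intro n
    exact hmem n
  · exact hper
end

section
/- Let w be a scalar (real or complex) with |w| > 1. The set of periodic points of the weighted backward shift A in c₀, namely {x ∈ C^∞(A) : ∃ N ∈ ℕ, A^N x = x}, is dense in c₀. -/
open Finset Filter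

namespace Rolewicz14Aux

/-- Exponent accumulated by `n` applications of the shift starting at index `k`. -/
def E (n k : ℕ) : ℕ := ∑ i ∈ Finset.range n, (k + 1 + i)

lemma E_succ (n k : ℕ) : E (n + 1) k = (k + 1) + E n (k + 1) := by
  unfold E
  rw [Finset.sum_range_succ']
  have h : ∀ i ∈ Finset.range n, (k + 1 + (i + 1)) = (k + 1 + 1 + i) := by
    intro i _; omega
  rw [Finset.sum_congr rfl h]
  ring

lemma E_ge (n k : ℕ) : n * (k + 1) ≤ E n k := by
  calc n * (k + 1) = ∑ _i ∈ Finset.range n, (k + 1) := by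
        rw [Finset.sum_const, Finset.card_range, smul_eq_mul]
    _ ≤ E n k := Finset.sum_le_sum (fun i _ => by omega)

lemma E_le (n k : ℕ) : E n k ≤ n * (k + 1 + n) := by
  calc E n k ≤ ∑ _i ∈ Finset.range n, (k + 1 + n) :=
        Finset.sum_le_sum (fun i hi => by
          have := Finset.mem_range.mp hi; omega)
    _ = n * (k + 1 + n) := by rw [Finset.sum_const, Finset.card_range, smul_eq_mul]

/-- The decay exponent making the sequence `N`-periodic under `A^N`. -/
def T (N k : ℕ) : ℕ := ∑ j ∈ Finset.range (k / N), E N (j * N + k % N)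

lemma T_eq_zero {N k : ℕ} (h : k < N) : T N k = 0 := by
  unfold T
  rw [Nat.div_eq_of_lt h]
  simp

lemma T_add {N : ℕ} (hN : 0 < N) (k : ℕ) : T N (k + N) = T N k + E N k := by
  unfold T
  rw [Nat.add_div_right k hN, Nat.add_mod_right, Finset.sum_range_succ,
    Nat.div_add_mod' k N]

lemma T_ge_N {N k : ℕ} (hN : 0 < N) (hk : N ≤ k) : N ≤ T N k := by
  have hq : 1 ≤ k / N := (Nat.one_le_div_iff hN).mpr hk
  have h0 : (0 : ℕ) ∈ Finset.range (k / N) := Finset.mem_range.mpr hq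
  calc N = N * 1 := (mul_one N).symm
    _ ≤ N * (0 * N + k % N + 1) := Nat.mul_le_mul_left N (by omega)
    _ ≤ E N (0 * N + k % N) := E_ge _ _
    _ ≤ T N k := by
        unfold T
        exact Finset.single_le_sum (f := fun j => E N (j * N + k % N))
          (fun i _ => Nat.zero_le _) h0

/-- Growth: eventually `T N (k + n)` dominates `E n k + k`. -/
lemma T_growth {N : ℕ} (hN : 0 < N) (n : ℕ) :
    ∀ᶠ k in atTop, E n k + k ≤ T N (k + n) := by
  filter_upwards [eventually_ge_atTop (N * (4 * n + 6))] with k hk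
  set m := k + n with hm
  set q := m / N with hq
  set r := m % N with hr
  have hmq : q * N + r = m := Nat.div_add_mod' m N
  have hrN : r < N := Nat.mod_lt _ hN
  have hqQ : 4 * n + 6 ≤ q := by
    rw [hq, Nat.le_div_iff_mul_le hN]
    calc (4 * n + 6) * N = N * (4 * n + 6) := by ring
      _ ≤ k := hk
      _ ≤ m := by omega
  obtain ⟨d, hd⟩ : ∃ d, q = d + 1 := ⟨q - 1, by omega⟩
  -- lower bound for T N m
  set S := ∑ j ∈ Finset.range q, j with hS
  have hGauss : S * 2 = q * (q - 1) := Finset.sum_range_id_mul_two q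
  have hGauss' : S * 2 = (d + 1) * d := by rw [hGauss, hd]; simp
  have hT1 : N * N * S ≤ T N m := by
    have : ∑ j ∈ Finset.range q, N * N * j ≤ T N m := by
      unfold T
      rw [← hq, ← hr]
      apply Finset.sum_le_sum
      intro j _
      calc N * N * j = N * (j * N) := by ring
        _ ≤ N * (j * N + r + 1) := by nlinarith
        _ ≤ E N (j * N + r) := E_ge _ _
    calc N * N * S = ∑ j ∈ Finset.range q, N * N * j := by
          rw [hS, Finset.mul_sum]
      _ ≤ T N m := this
  -- upper bound for E n k + k
  have hE : E n k ≤ n * (k + 1 + n) := E_le n k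
  have e2 : (n + 1) * (k + n + 1) = n * (k + 1 + n) + (k + n + 1) := by ring
  have hk1 : k + n + 1 ≤ N * (q + 1) := by
    have e1 : N * (q + 1) = q * N + N := by ring
    omega
  have step1 : 2 * (E n k + k) ≤ 2 * ((n + 1) * (k + n + 1)) := by omega
  have step2 : 2 * ((n + 1) * (k + n + 1)) ≤ 2 * ((n + 1) * (N * (q + 1))) := by
    have := Nat.mul_le_mul_left (n + 1) hk1
    omega
  have step3 : 2 * ((n + 1) * (N * (q + 1))) ≤ 4 * (n + 1) * (N * q) := by
    have hq1 : q + 1 ≤ 2 * q := by omega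
    calc 2 * ((n + 1) * (N * (q + 1))) = 2 * (n + 1) * N * (q + 1) := by ring
      _ ≤ 2 * (n + 1) * N * (2 * q) := Nat.mul_le_mul_left _ hq1
      _ = 4 * (n + 1) * (N * q) := by ring
  have step4 : 4 * (n + 1) * (N * q) ≤ d * (N * q) := by
    have : 4 * (n + 1) ≤ d := by omega
    exact Nat.mul_le_mul_right _ this
  have step5 : d * (N * q) ≤ N * N * ((d + 1) * d) := by
    calc d * (N * q) = N * (q * d) := by ring
      _ ≤ N * N * (q * d) := by nlinarith
      _ = N * N * ((d + 1) * d) := by rw [hd]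
  have final : 2 * (E n k + k) ≤ 2 * T N m := by
    calc 2 * (E n k + k) ≤ 4 * (n + 1) * (N * q) := by omega
      _ ≤ N * N * ((d + 1) * d) := le_trans step4 step5
      _ = N * N * (S * 2) := by rw [hGauss']
      _ = 2 * (N * N * S) := by ring
      _ ≤ 2 * T N m := by omega
  omega

section Field

variable {𝕜 : Type*} [RCLike 𝕜]

lemma iter_eq (w : 𝕜) (A : (ℕ → 𝕜) → ℕ → 𝕜)
    (hA : ∀ x k, A x k = w ^ (k + 1) * x (k + 1)) (x : ℕ → 𝕜) :
    ∀ n k, A^[n] x k = w ^ E n k * x (k + n) := by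
  intro n
  induction n with
  | zero => intro k; simp [E]
  | succ n ih =>
    intro k
    rw [Function.iterate_succ_apply', hA, ih (k + 1), E_succ, pow_add]
    have h : k + 1 + n = k + (n + 1) := by omega
    rw [h]
    ring

/-- The periodically extended sequence. -/
noncomputable def per (w : 𝕜) (N : ℕ) (y : ℕ → 𝕜) (k : ℕ) : 𝕜 :=
  y (k % N) * w⁻¹ ^ T N k

lemma per_periodic (w : 𝕜) (hw0 : w ≠ 0) {N : ℕ} (hN : 0 < N) (y : ℕ → 𝕜)
    (A : (ℕ → 𝕜) → ℕ → 𝕜) (hA : ∀ x k, A x k = w ^ (k + 1) * x (k + 1)) :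
    A^[N] (per w N y) = per w N y := by
  funext k
  rw [iter_eq w A hA]
  unfold per
  rw [Nat.add_mod_right, T_add hN, pow_add]
  have h1 : w ^ E N k * w⁻¹ ^ E N k = 1 := by
    rw [← mul_pow, mul_inv_cancel₀ hw0, one_pow]
  calc w ^ E N k * (y (k % N) * (w⁻¹ ^ T N k * w⁻¹ ^ E N k))
      = (w ^ E N k * w⁻¹ ^ E N k) * (y (k % N) * w⁻¹ ^ T N k) := by ring
    _ = y (k % N) * w⁻¹ ^ T N k := by rw [h1, one_mul]

lemma per_tendsto (w : 𝕜) (hw : 1 < ‖w‖) {N : ℕ} (hN : 0 < N) (y : ℕ → 𝕜)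
    {M : ℝ} (hM : ∀ r, ‖y r‖ ≤ M)
    (A : (ℕ → 𝕜) → ℕ → 𝕜) (hA : ∀ x k, A x k = w ^ (k + 1) * x (k + 1)) (n : ℕ) :
    Tendsto (A^[n] (per w N y)) atTop (nhds 0) := by
  have ha0 : (0 : ℝ) < ‖w‖ := lt_trans zero_lt_one hw
  have hai : ‖w‖⁻¹ < 1 := inv_lt_one_of_one_lt₀ hw
  have hai0 : (0 : ℝ) ≤ ‖w‖⁻¹ := inv_nonneg.mpr (le_of_lt ha0)
  have hM0 : 0 ≤ M := le_trans (norm_nonneg _) (hM 0)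
  refine squeeze_zero_norm' (a := fun k => M * ‖w‖⁻¹ ^ k) ?_ ?_
  · filter_upwards [T_growth (N := N) hN n] with k hk
    rw [iter_eq w A hA]
    unfold per
    have hstep : ‖w‖ ^ E n k * ‖w‖⁻¹ ^ T N (k + n) ≤ ‖w‖⁻¹ ^ k := by
      obtain ⟨t, ht⟩ : ∃ t, T N (k + n) = E n k + t := ⟨T N (k + n) - E n k, by omega⟩
      have hk' : k ≤ t := by omega
      calc ‖w‖ ^ E n k * ‖w‖⁻¹ ^ T N (k + n)
          = (‖w‖ ^ E n k * ‖w‖⁻¹ ^ E n k) * ‖w‖⁻¹ ^ t := by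
            rw [ht, pow_add]; ring
        _ = ‖w‖⁻¹ ^ t := by
            rw [← mul_pow, mul_inv_cancel₀ (ne_of_gt ha0), one_pow, one_mul]
        _ ≤ ‖w‖⁻¹ ^ k := pow_le_pow_of_le_one hai0 (le_of_lt hai) hk'
    calc ‖w ^ E n k * (y ((k + n) % N) * w⁻¹ ^ T N (k + n))‖
        = ‖y ((k + n) % N)‖ * (‖w‖ ^ E n k * ‖w‖⁻¹ ^ T N (k + n)) := by
          rw [norm_mul, norm_mul, norm_pow, norm_pow, norm_inv]; ring
      _ ≤ M * ‖w‖⁻¹ ^ k := by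
          apply mul_le_mul (hM _) hstep (by positivity) hM0
  · simpa using (tendsto_pow_atTop_nhds_zero_of_lt_one hai0 hai).const_mul M

end Field

end Rolewicz14Aux

open Rolewicz14Aux

/-- For the weighted backward shift `A` (0-based:
`A x k = w ^ (k+1) * x (k+1)`) with `|w| > 1` on `c₀` (sup norm), the set of periodic
points `{x ∈ C^∞(A) | ∃ N ≥ 1, A^N x = x}` is dense in `c₀`. -/
theorem rolewicz_c0_periodic_points_dense {𝕜 : Type*} [RCLike 𝕜]
    (w : 𝕜) (hw : 1 < ‖w‖)
    (A : (ℕ → 𝕜) → ℕ → 𝕜) (hA : ∀ x k, A x k = w ^ (k + 1) * x (k + 1)) :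
    Dense {x : ZeroAtInftyContinuousMap ℕ 𝕜 |
      (∀ n : ℕ, Filter.Tendsto (A^[n] ⇑x) Filter.atTop (nhds 0)) ∧
      ∃ N : ℕ, 0 < N ∧ A^[N] ⇑x = ⇑x} := by
  have ha0 : (0 : ℝ) < ‖w‖ := lt_trans zero_lt_one hw
  have hw0 : w ≠ 0 := by
    intro h; rw [h, norm_zero] at hw; linarith
  have hai : ‖w‖⁻¹ < 1 := inv_lt_one_of_one_lt₀ hw
  have hai0 : (0 : ℝ) ≤ ‖w‖⁻¹ := inv_nonneg.mpr (le_of_lt ha0)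
  rw [Metric.dense_iff]
  intro f ε hε
  -- find a good N
  have hz : Tendsto (⇑f) atTop (nhds 0) := by
    have := f.zero_at_infty'
    rwa [cocompact_eq_atTop (α := ℕ)] at this
  have h1 : ∀ᶠ k in atTop, ‖f k‖ < ε / 3 :=
    NormedAddCommGroup.tendsto_nhds_zero.mp hz (ε / 3) (by positivity)
  obtain ⟨N₁, hN₁⟩ := eventually_atTop.mp h1
  have h2 : ∀ᶠ (N' : ℕ) in atTop, ‖f‖ * ‖w‖⁻¹ ^ N' < ε / 3 := by
    have ht : Tendsto (fun N' : ℕ => ‖f‖ * ‖w‖⁻¹ ^ N') atTop (nhds 0) := by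
      simpa using (tendsto_pow_atTop_nhds_zero_of_lt_one hai0 hai).const_mul ‖f‖
    exact ht.eventually_lt_const (by positivity)
  obtain ⟨N, hNsmall, hNge⟩ := (h2.and (eventually_ge_atTop (max N₁ 1))).exists
  have hN1 : 1 ≤ N := le_trans (le_max_right _ _) hNge
  have hNN₁ : N₁ ≤ N := le_trans (le_max_left _ _) hNge
  have hN : 0 < N := hN1
  -- the candidate periodic point
  set x : ℕ → 𝕜 := per w N (⇑f) with hx
  have hfb : ∀ r, ‖f r‖ ≤ ‖f‖ := by
    intro r
    have := BoundedContinuousFunction.norm_coe_le_norm f.toBCF r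
    rwa [ZeroAtInftyContinuousMap.norm_toBCF_eq_norm] at this
  have htend : ∀ n, Tendsto (A^[n] x) atTop (nhds 0) :=
    fun n => per_tendsto w hw hN (⇑f) hfb A hA n
  have hx0 : Tendsto x atTop (nhds 0) := by
    have := htend 0
    simpa using this
  set g : ZeroAtInftyContinuousMap ℕ 𝕜 :=
    { toFun := x
      continuous_toFun := continuous_of_discreteTopology
      zero_at_infty' := by rw [cocompact_eq_atTop (α := ℕ)]; exact hx0 } with hg
  have hgc : ⇑g = x := rfl
  refine ⟨g, ?_, ?_⟩
  · -- g is in the ball around f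
    rw [Metric.mem_ball]
    have key : ∀ k, dist (g k) (f k) ≤ 2 * ε / 3 := by
      intro k
      by_cases hk : k < N
      · have : g k = f k := by
          rw [hgc, hx]
          unfold per
          rw [Nat.mod_eq_of_lt hk, T_eq_zero hk, pow_zero, mul_one]
        rw [this, dist_self]
        positivity
      · push_neg at hk
        have hxk : ‖x k‖ ≤ ‖f‖ * ‖w‖⁻¹ ^ N := by
          rw [hx]
          unfold per
          rw [norm_mul, norm_pow, norm_inv]
          have hT : N ≤ T N k := T_ge_N hN hk
          calc ‖f (k % N)‖ * ‖w‖⁻¹ ^ T N k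
              ≤ ‖f‖ * ‖w‖⁻¹ ^ T N k := by
                apply mul_le_mul_of_nonneg_right (hfb _) (by positivity)
            _ ≤ ‖f‖ * ‖w‖⁻¹ ^ N := by
                apply mul_le_mul_of_nonneg_left
                  (pow_le_pow_of_le_one hai0 (le_of_lt hai) hT) (norm_nonneg _)
        have hfk : ‖f k‖ < ε / 3 := hN₁ k (le_trans hNN₁ hk)
        calc dist (g k) (f k) ≤ ‖g k‖ + ‖f k‖ := by
              rw [dist_eq_norm]; exact norm_sub_le _ _
          _ ≤ (‖f‖ * ‖w‖⁻¹ ^ N) + ε / 3 := by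
              rw [hgc]
              exact add_le_add hxk (le_of_lt hfk)
          _ ≤ ε / 3 + ε / 3 := add_le_add (le_of_lt hNsmall) le_rfl
          _ ≤ 2 * ε / 3 := by linarith
    have : dist g f ≤ 2 * ε / 3 := by
      rw [← ZeroAtInftyContinuousMap.isometry_toBCF.dist_eq]
      exact (BoundedContinuousFunction.dist_le (by positivity)).mpr key
    linarith
  · -- g is a periodic point
    refine ⟨fun n => by rw [hgc]; exact htend n, N, hN, ?_⟩
    rw [hgc, hx]
    exact per_periodic w hw0 hN (⇑f) A hA
end

section
/- Let w ∈ ℂ with |w| > 1, 1 ≤ p < ∞, and λ ∈ ℂ. The sequence y defined by y_k = λ^{k−1} / w^{k(k−1)/2} (k ∈ ℕ, with 0⁰ := 1) satisfies: y ∈ ℓ^p, y ≠ 0, y ∈ D(A), and Ay = λy. In particular, every λ ∈ ℂ is an eigenvalue of the weighted backward shift A on complex ℓ^p, so the spectrum of A is all of ℂ. -/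
open scoped ENNReal

/-- Let `w ∈ ℂ`, `|w| > 1`, `1 ≤ p < ∞`, `λ ∈ ℂ`. The sequence
`y_k = λ^{k-1} / w^{k(k-1)/2}` (1-based; 0-based: `y k = λ^k / w^{k(k+1)/2}`, with
`0⁰ = 1`) lies in `ℓ^p`, is nonzero, belongs to `D(A)`, and satisfies `Ay = λy` for the
weighted backward shift `A` (0-based: `A x k = w ^ (k+1) * x (k+1)`). In particular,
every `λ ∈ ℂ` is an eigenvalue of `A` on complex `ℓ^p`. -/
theorem rolewicz_lp_eigenvalue (w : ℂ) (hw : 1 < ‖w‖)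
    (p : ℝ≥0∞) (hp : 1 ≤ p) (hp' : p ≠ ∞)
    (A : (ℕ → ℂ) → ℕ → ℂ) (hA : ∀ x k, A x k = w ^ (k + 1) * x (k + 1))
    (lam : ℂ) (y : ℕ → ℂ)
    (hy : ∀ k : ℕ, y k = lam ^ k / w ^ (k * (k + 1) / 2)) :
    Memℓp y p ∧ y ≠ 0 ∧ Memℓp (A y) p ∧ A y = lam • y := by
  have hw0 : w ≠ 0 := by
    intro h; rw [h, norm_zero] at hw; linarith
  have hexp : ∀ k : ℕ, (k + 1) * (k + 2) / 2 = k * (k + 1) / 2 + (k + 1) := by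
    intro k
    obtain ⟨m, hm⟩ := Nat.even_mul_succ_self k
    have h1 : k * (k + 1) = 2 * m := by omega
    have h2 : (k + 1) * (k + 2) = 2 * (m + (k + 1)) := by nlinarith
    omega
  -- A y = lam • y
  have hAy : A y = lam • y := by
    funext k
    simp only [hA, hy, Pi.smul_apply, smul_eq_mul]
    have : (k + 1) * ((k + 1) + 1) / 2 = k * (k + 1) / 2 + (k + 1) := hexp k
    rw [this, pow_add, pow_succ]
    field_simp
    ring
  -- norm recursion
  have hrec : ∀ k : ℕ, ‖y (k + 1)‖ = (‖lam‖ / ‖w‖ ^ (k + 1)) * ‖y k‖ := by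
    intro k
    rw [hy, hy]
    have : (k + 1) * ((k + 1) + 1) / 2 = k * (k + 1) / 2 + (k + 1) := hexp k
    rw [this]
    have hwn : (0:ℝ) < ‖w‖ := by linarith
    rw [norm_div, norm_div, norm_pow, norm_pow, norm_pow, pow_add, pow_succ]
    field_simp
    rw [norm_pow]
    ring
  set q := p.toReal with hq
  have hq1 : 1 ≤ q := by
    rw [hq]
    rw [← ENNReal.toReal_one]
    exact ENNReal.toReal_mono hp' hp
  have hq0 : 0 ≤ q := by linarith
  -- summability
  have hmem : Memℓp y p := by
    apply memℓp_gen
    apply summable_of_ratio_norm_eventually_le (r := 1/2) (by norm_num)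
    have htend : Filter.Tendsto (fun k : ℕ => ‖w‖ ^ (k + 1)) Filter.atTop Filter.atTop := by
      exact (tendsto_pow_atTop_atTop_of_one_lt hw).comp (Filter.tendsto_add_atTop_nat 1)
    have hev : ∀ᶠ k in Filter.atTop, 2 * ‖lam‖ ≤ ‖w‖ ^ (k + 1) :=
      htend.eventually_ge_atTop _
    filter_upwards [hev] with k hk
    have hyk : 0 ≤ ‖y k‖ := norm_nonneg _
    have hwk : (0:ℝ) < ‖w‖ ^ (k + 1) := pow_pos (by linarith) _
    have hsmall : ‖lam‖ / ‖w‖ ^ (k + 1) ≤ 1/2 := by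
      rw [div_le_iff₀ hwk]; nlinarith [norm_nonneg lam]
    have h1 : ‖y (k + 1)‖ ≤ (1/2) * ‖y k‖ := by
      rw [hrec k]
      apply mul_le_mul_of_nonneg_right hsmall hyk
    have h2 : ‖y (k + 1)‖ ^ q ≤ ((1/2) * ‖y k‖) ^ q :=
      Real.rpow_le_rpow (norm_nonneg _) h1 hq0
    rw [Real.norm_of_nonneg (Real.rpow_nonneg (norm_nonneg _) _),
        Real.norm_of_nonneg (Real.rpow_nonneg (norm_nonneg _) _)]
    refine h2.trans ?_
    rw [Real.mul_rpow (by norm_num) hyk]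
    have hhalf : ((1:ℝ)/2) ^ q ≤ 1/2 := by
      calc ((1:ℝ)/2) ^ q ≤ (1/2 : ℝ) ^ (1:ℝ) :=
            Real.rpow_le_rpow_of_exponent_ge (by norm_num) (by norm_num) hq1
        _ = 1/2 := Real.rpow_one _
    exact mul_le_mul_of_nonneg_right hhalf (Real.rpow_nonneg hyk q)
  refine ⟨hmem, ?_, ?_, hAy⟩
  · intro h0
    have : y 0 = 0 := congrFun h0 0
    rw [hy 0] at this
    simp at this
  · rw [hAy]
    exact hmem.const_smul lam
end

section
/- Let w ∈ ℂ with |w| > 1 and λ ∈ ℂ. The sequence y defined by y_k = λ^{k−1} / w^{k(k−1)/2} (k ∈ ℕ, with 0⁰ := 1) satisfies: y ∈ c₀, y ≠ 0, y ∈ D(A), and Ay = λy. In particular, every λ ∈ ℂ is an eigenvalue of the weighted backward shift A on complex c₀, so the spectrum of A is all of ℂ. -/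
/-- Let `w ∈ ℂ`, `|w| > 1`, `λ ∈ ℂ`. The sequence
`y_k = λ^{k-1} / w^{k(k-1)/2}` (1-based; 0-based: `y k = λ^k / w^{k(k+1)/2}`, with
`0⁰ = 1`) lies in `c₀`, is nonzero, belongs to `D(A)`, and satisfies `Ay = λy` for the
weighted backward shift `A` (0-based: `A x k = w ^ (k+1) * x (k+1)`). In particular,
every `λ ∈ ℂ` is an eigenvalue of `A` on complex `c₀`. -/
theorem rolewicz_c0_eigenvalue (w : ℂ) (hw : 1 < ‖w‖)
    (A : (ℕ → ℂ) → ℕ → ℂ) (hA : ∀ x k, A x k = w ^ (k + 1) * x (k + 1))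
    (lam : ℂ) (y : ℕ → ℂ)
    (hy : ∀ k : ℕ, y k = lam ^ k / w ^ (k * (k + 1) / 2)) :
    Filter.Tendsto y Filter.atTop (nhds 0) ∧ y ≠ 0 ∧
    Filter.Tendsto (A y) Filter.atTop (nhds 0) ∧ A y = lam • y := by
  have hw0 : w ≠ 0 := by
    intro h
    rw [h, norm_zero] at hw; linarith
  -- The eigenvector equation
  have heq : A y = lam • y := by
    funext k
    simp only [hA, hy, Pi.smul_apply, smul_eq_mul]
    have hnat : (k + 1) * (k + 1 + 1) / 2 = k * (k + 1) / 2 + (k + 1) := by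
      have h1 : (k + 1) * (k + 1 + 1) = k * (k + 1) + 2 * (k + 1) := by ring
      have h2 : 2 ∣ k * (k + 1) := (Nat.even_mul_succ_self k).two_dvd
      omega
    rw [hnat, pow_add]
    have hw1 : w ^ (k * (k + 1) / 2) ≠ 0 := pow_ne_zero _ hw0
    have hw2 : w ^ (k + 1) ≠ 0 := pow_ne_zero _ hw0

    field_simp
    ring
  -- Tendsto y → 0
  have hy0 : Filter.Tendsto y Filter.atTop (nhds 0) := by
    obtain ⟨m, hm⟩ := pow_unbounded_of_one_lt (‖lam‖ + 1) hw
    set r : ℝ := ‖lam‖ / ‖w‖ ^ (m + 1) with hr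
    have hwpos : (0:ℝ) < ‖w‖ := by linarith
    have hwm : ‖lam‖ + 1 < ‖w‖ ^ (m + 1) := by
      calc ‖lam‖ + 1 < ‖w‖ ^ m := hm
        _ ≤ ‖w‖ ^ (m + 1) := pow_le_pow_right₀ (le_of_lt hw) (Nat.le_succ m)
    have hwmpos : (0:ℝ) < ‖w‖ ^ (m + 1) := pow_pos hwpos _
    have hr0 : 0 ≤ r := div_nonneg (norm_nonneg _) (le_of_lt hwmpos)
    have hr1 : r < 1 := by
      rw [hr, div_lt_one hwmpos]; linarith [norm_nonneg lam]
    have htend : Filter.Tendsto (fun k : ℕ => r ^ k) Filter.atTop (nhds 0) :=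
      tendsto_pow_atTop_nhds_zero_of_lt_one hr0 hr1
    apply squeeze_zero_norm' _ htend
    filter_upwards [Filter.eventually_ge_atTop (2 * (m + 1))] with k hk
    have hkm : (m + 1) * k ≤ k * (k + 1) / 2 := by
      have h2 : 2 ∣ k * (k + 1) := (Nat.even_mul_succ_self k).two_dvd
      have : 2 * ((m + 1) * k) ≤ k * (k + 1) := by
        calc 2 * ((m + 1) * k) = (2 * (m + 1)) * k := by ring
          _ ≤ k * k := Nat.mul_le_mul_right k hk
          _ ≤ k * (k + 1) := Nat.mul_le_mul_left k (Nat.le_succ k)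
      omega
    rw [hy]
    rw [norm_div, norm_pow, norm_pow]
    have hwk : ‖w‖ ^ ((m + 1) * k) ≤ ‖w‖ ^ (k * (k + 1) / 2) :=
      pow_le_pow_right₀ (le_of_lt hw) hkm
    have hpos : (0:ℝ) < ‖w‖ ^ ((m + 1) * k) := pow_pos hwpos _
    calc ‖lam‖ ^ k / ‖w‖ ^ (k * (k + 1) / 2)
        ≤ ‖lam‖ ^ k / ‖w‖ ^ ((m + 1) * k) :=
          div_le_div_of_nonneg_left (pow_nonneg (norm_nonneg _) k) hpos hwk
      _ = r ^ k := by
          rw [hr, div_pow, ← pow_mul]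
  refine ⟨hy0, ?_, ?_, heq⟩
  · intro h
    have h0 := congrFun h 0
    rw [hy] at h0
    simp at h0
  · rw [heq]
    have := hy0.const_smul lam
    simpa [Pi.smul_def] using this
end

section
/- Let w ∈ ℂ with |w| > 1, 1 ≤ p < ∞, and λ ∈ ℂ. If x ∈ D(A) satisfies Ax = λx, then x_k = x₁ · λ^{k−1} / w^{k(k−1)/2} for all k ∈ ℕ (with 0⁰ := 1); hence the eigenspace of A associated with λ is the one-dimensional subspace of ℓ^p spanned by the sequence (λ^{k−1} / w^{k(k−1)/2})_{k∈ℕ}. -/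
open scoped ENNReal

private lemma tri_step (k : ℕ) : (k + 1) * (k + 2) / 2 = k * (k + 1) / 2 + (k + 1) := by
  have h : (k + 1) * (k + 2) = k * (k + 1) + (k + 1) * 2 := by ring
  rw [h, Nat.add_mul_div_right _ _ (by norm_num : (0:ℕ) < 2)]

/-- Let `w ∈ ℂ`, `|w| > 1`, `1 ≤ p < ∞`, `λ ∈ ℂ`. Every `x ∈ D(A)`
with `Ax = λx` satisfies `x_k = x₁ · λ^{k-1} / w^{k(k-1)/2}` (1-based; 0-based:
`x k = x 0 * (λ^k / w^{k(k+1)/2})`, with `0⁰ = 1`); hence the eigenspace of the weighted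
backward shift `A` (0-based: `A x k = w ^ (k+1) * x (k+1)`) associated with `λ` is the
one-dimensional subspace of `ℓ^p` spanned by `(λ^{k-1} / w^{k(k-1)/2})ₖ`. -/
theorem rolewicz_lp_eigenspace_one_dimensional (w : ℂ) (hw : 1 < ‖w‖)
    (p : ℝ≥0∞) (hp : 1 ≤ p) (hp' : p ≠ ∞)
    (A : (ℕ → ℂ) → ℕ → ℂ) (hA : ∀ x k, A x k = w ^ (k + 1) * x (k + 1))
    (lam : ℂ) :
    (∀ x : ℕ → ℂ, Memℓp x p → Memℓp (A x) p → A x = lam • x →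
      ∀ k : ℕ, x k = x 0 * (lam ^ k / w ^ (k * (k + 1) / 2))) ∧
    {x : ℕ → ℂ | Memℓp x p ∧ Memℓp (A x) p ∧ A x = lam • x} =
      {x : ℕ → ℂ | ∃ c : ℂ, x = c • fun k : ℕ => lam ^ k / w ^ (k * (k + 1) / 2)} := by
  have hw0 : w ≠ 0 := by
    intro h; rw [h, norm_zero] at hw; linarith
  set y : ℕ → ℂ := fun k : ℕ => lam ^ k / w ^ (k * (k + 1) / 2) with hy_def
  -- recurrence for y
  have hyrec : ∀ k : ℕ, w ^ (k + 1) * y (k + 1) = lam * y k := by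
    intro k
    simp only [hy_def]
    rw [tri_step k]
    rw [pow_add, pow_succ]
    field_simp
    ring
  -- Part 1
  have part1 : ∀ x : ℕ → ℂ, Memℓp x p → Memℓp (A x) p → A x = lam • x →
      ∀ k : ℕ, x k = x 0 * (lam ^ k / w ^ (k * (k + 1) / 2)) := by
    intro x _ _ heq k
    have hrec : ∀ k : ℕ, w ^ (k + 1) * x (k + 1) = lam * x k := by
      intro k
      have := congrFun heq k
      rw [hA] at this
      simpa using this
    induction k with
    | zero => simp
    | succ k ih =>
      have h1 := hrec k
      rw [ih] at h1
      have h2 : x (k + 1) = lam * (x 0 * (lam ^ k / w ^ (k * (k + 1) / 2))) / w ^ (k + 1) := by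
        field_simp at h1 ⊢
        linear_combination h1
      rw [h2, tri_step k, pow_add, pow_succ]
      field_simp
      ring
  refine ⟨part1, ?_⟩
  -- y ∈ ℓ^p
  have hpr : 0 < p.toReal := ENNReal.toReal_pos (by positivity) hp'
  have hyp : Memℓp y p := by
    apply memℓp_gen
    apply summable_of_ratio_norm_eventually_le (r := 1/2) (by norm_num)
    have hw0' : (0:ℝ) < ‖w‖ := by linarith
    -- the ratio ‖y (n+1)‖/‖y n‖ = ‖lam‖ / ‖w‖^(n+1) tends to 0
    have htend : Filter.Tendsto (fun n : ℕ => (‖lam‖ / ‖w‖ ^ (n + 1)) ^ p.toReal)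
        Filter.atTop (nhds 0) := by
      have h1 : Filter.Tendsto (fun n : ℕ => ‖lam‖ / ‖w‖ ^ (n + 1)) Filter.atTop (nhds 0) := by
        have := tendsto_pow_atTop_atTop_of_one_lt hw
        have h2 : Filter.Tendsto (fun n : ℕ => ‖w‖ ^ (n + 1)) Filter.atTop Filter.atTop :=
          this.comp (Filter.tendsto_add_atTop_nat 1)
        simpa using h2.const_div_atTop ‖lam‖
      have hc : ContinuousAt (fun t : ℝ => t ^ p.toReal) 0 :=
        Real.continuousAt_rpow_const 0 p.toReal (Or.inr hpr.le)
      have := hc.tendsto.comp h1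
      simpa [Function.comp_def, Real.zero_rpow hpr.ne'] using this
    have hev : ∀ᶠ n : ℕ in Filter.atTop,
        (‖lam‖ / ‖w‖ ^ (n + 1)) ^ p.toReal ≤ 1/2 := by
      have := htend.eventually_le_const (by norm_num : (0:ℝ) < 1/2)
      simpa using this
    filter_upwards [hev] with n hn
    have hyn : ‖y (n + 1)‖ = ‖y n‖ * (‖lam‖ / ‖w‖ ^ (n + 1)) := by
      have := hyrec n
      have h2 : y (n + 1) = lam * y n / w ^ (n + 1) := by
        field_simp at this ⊢
        linear_combination this
      rw [h2]
      rw [norm_div, norm_mul, norm_pow]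
      field_simp
    have hpos : (0:ℝ) ≤ ‖y n‖ ^ p.toReal := by positivity
    have key : ‖y (n + 1)‖ ^ p.toReal = ‖y n‖ ^ p.toReal * (‖lam‖ / ‖w‖ ^ (n + 1)) ^ p.toReal := by
      rw [hyn, Real.mul_rpow (norm_nonneg _) (by positivity)]
    rw [Real.norm_of_nonneg (by positivity), Real.norm_of_nonneg (by positivity), key]
    calc ‖y n‖ ^ p.toReal * (‖lam‖ / ‖w‖ ^ (n + 1)) ^ p.toReal
        ≤ ‖y n‖ ^ p.toReal * (1/2) := by
          exact mul_le_mul_of_nonneg_left hn hpos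
      _ = 1/2 * ‖y n‖ ^ p.toReal := by ring
  -- Set equality
  ext x
  constructor
  · rintro ⟨hx, hAx, heq⟩
    exact ⟨x 0, funext fun k => by simpa using part1 x hx hAx heq k⟩
  · rintro ⟨c, rfl⟩
    have heq : A (c • y) = lam • (c • y) := by
      funext k
      rw [hA]
      simp only [Pi.smul_apply, smul_eq_mul]
      rw [show w ^ (k + 1) * (c * y (k + 1)) = c * (w ^ (k + 1) * y (k + 1)) by ring, hyrec k]
      ring
    refine ⟨hyp.const_smul c, ?_, heq⟩
    rw [heq]
    exact (hyp.const_smul c).const_smul lam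
end
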